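/- arXiv:0908.1294 — 5 statements merged into one kernel-verified Lean document; each statement's English description precedes it below -/
import Mathlib

section
/- Let (X,B) be a finite CW pair and let ω = {f_U}_{U∈𝒰} and ω' be continuous closed 1-forms on X. If there exists a continuous function f : X → ℝ such that ω' is equivalent to the continuous closed 1-form ω + df = {f_U + f|_U}_{U∈𝒰}, then cat(X,B,ω) = cat(X,B,ω'). In particular, cat(X,B,ω) depends only on the cohomology class of ω. -/
open Set

/-- A continuous closed 1-form on a topological space `X`: a collection of continuous
real-valued functions on the members of an open cover whose pairwise differences are
locally constant on overlaps. -/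
structure ClosedOneForm (X : Type) [TopologicalSpace X] where
  ι : Type
  U : ι → Set X
  isOpen : ∀ i, IsOpen (U i)
  covers : ∀ x : X, ∃ i, x ∈ U i
  f : ι → X → ℝ
  cont : ∀ i, ContinuousOn (f i) (U i)
  locConst : ∀ i j, IsLocallyConstant (fun y : ↥(U i ∩ U j) => f i y - f j y)

namespace ClosedOneForm

variable {X Y : Type} [TopologicalSpace X] [TopologicalSpace Y]

/-- `r` is the value of the line integral of `ω` along `γ` over `[a,b]`, computed via a
partition `a = t_0 < t_1 < ⋯ < t_n = b` with `γ [t_i, t_{i+1}] ⊆ U (c i)`. -/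
def IsIntegralOn (ω : ClosedOneForm X) (γ : ℝ → X) (a b r : ℝ) : Prop :=
  ∃ (n : ℕ) (t : ℕ → ℝ) (c : ℕ → ω.ι),
    0 < n ∧ t 0 = a ∧ t n = b ∧ (∀ i < n, t i < t (i + 1)) ∧
    (∀ i < n, MapsTo γ (Icc (t i) (t (i + 1))) (ω.U (c i))) ∧
    r = ∑ i ∈ Finset.range n, (ω.f (c i) (γ (t (i + 1))) - ω.f (c i) (γ (t i)))

/-- The line integral of `ω` along `γ` over `[a,b]` (`0` if no suitable partition exists,
in particular it is `0` for a degenerate interval). -/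
noncomputable def intOn (ω : ClosedOneForm X) (γ : ℝ → X) (a b : ℝ) : ℝ :=
  haveI := Classical.propDecidable
  if h : ∃ r, ω.IsIntegralOn γ a b r then h.choose else 0

/-- The pullback of a continuous closed 1-form along a continuous map. -/
noncomputable def pullback (ω : ClosedOneForm X) (φ : Y → X) (hφ : Continuous φ) :
    ClosedOneForm Y where
  ι := ω.ι
  U i := φ ⁻¹' ω.U i
  isOpen i := (ω.isOpen i).preimage hφ
  covers y := ω.covers (φ y)
  f i := ω.f i ∘ φ
  cont i := (ω.cont i).comp hφ.continuousOn (mapsTo_preimage φ (ω.U i))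
  locConst i j := by
    have h := (ω.locConst i j).comp_continuous
      (f := fun y : ↥(φ ⁻¹' ω.U i ∩ φ ⁻¹' ω.U j) =>
        (⟨φ y.1, y.2⟩ : ↥(ω.U i ∩ ω.U j)))
      (by exact Continuous.subtype_mk (hφ.comp continuous_subtype_val) _)
    exact h

/-- The restriction of a continuous closed 1-form to a subspace. -/
noncomputable def restrict (ω : ClosedOneForm X) (B : Set X) : ClosedOneForm B :=
  ω.pullback (Subtype.val : B → X) continuous_subtype_val

/-- The sum of two continuous closed 1-forms, on the common refinement of the covers. -/
noncomputable def add (ω₁ ω₂ : ClosedOneForm X) : ClosedOneForm X where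
  ι := ω₁.ι × ω₂.ι
  U p := ω₁.U p.1 ∩ ω₂.U p.2
  isOpen p := (ω₁.isOpen p.1).inter (ω₂.isOpen p.2)
  covers x := by
    obtain ⟨i, hi⟩ := ω₁.covers x
    obtain ⟨j, hj⟩ := ω₂.covers x
    exact ⟨(i, j), hi, hj⟩
  f p x := ω₁.f p.1 x + ω₂.f p.2 x
  cont p := ((ω₁.cont p.1).mono inter_subset_left).add ((ω₂.cont p.2).mono inter_subset_right)
  locConst := by
    rintro ⟨i, j⟩ ⟨i', j'⟩
    have h₁ : IsLocallyConstant
        (fun y : ↥((ω₁.U i ∩ ω₂.U j) ∩ (ω₁.U i' ∩ ω₂.U j')) => ω₁.f i y - ω₁.f i' y) :=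
      by
        have := (ω₁.locConst i i').comp_continuous
          (f := fun y : ↥((ω₁.U i ∩ ω₂.U j) ∩ (ω₁.U i' ∩ ω₂.U j')) =>
            (⟨y.1, y.2.1.1, y.2.2.1⟩ : ↥(ω₁.U i ∩ ω₁.U i')))
          (Continuous.subtype_mk continuous_subtype_val _)
        exact this
    have h₂ : IsLocallyConstant
        (fun y : ↥((ω₁.U i ∩ ω₂.U j) ∩ (ω₁.U i' ∩ ω₂.U j')) => ω₂.f j y - ω₂.f j' y) :=
      by
        have := (ω₂.locConst j j').comp_continuous
          (f := fun y : ↥((ω₁.U i ∩ ω₂.U j) ∩ (ω₁.U i' ∩ ω₂.U j')) =>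
            (⟨y.1, y.2.1.2, y.2.2.2⟩ : ↥(ω₂.U j ∩ ω₂.U j')))
          (Continuous.subtype_mk continuous_subtype_val _)
        exact this
    have := h₁.add h₂
    convert this using 1
    funext y
    simp only [Pi.add_apply]
    ring

/-- Adding the exact form `df` of a continuous function `f` to `ω`. -/
def addFun (ω : ClosedOneForm X) (g : X → ℝ) (hg : Continuous g) : ClosedOneForm X where
  ι := ω.ι
  U := ω.U
  isOpen := ω.isOpen
  covers := ω.covers
  f i x := ω.f i x + g x
  cont i := (ω.cont i).add hg.continuousOn
  locConst i j := by
    have := ω.locConst i j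
    convert this using 1
    funext y
    ring

/-- The exact continuous closed 1-form `df` determined by a continuous function `f`,
given by the single function `f` on the open cover `{X}`. -/
def ofFun (g : X → ℝ) (hg : Continuous g) : ClosedOneForm X where
  ι := PUnit
  U _ := univ
  isOpen _ := isOpen_univ
  covers x := ⟨PUnit.unit, mem_univ x⟩
  f _ := g
  cont _ := hg.continuousOn
  locConst _ _ := by
    have : (fun y : ↥((univ : Set X) ∩ univ) => g y - g y) = fun _ => (0 : ℝ) := by
      funext; ring
    rw [this]
    exact IsLocallyConstant.const 0

/-- Two continuous closed 1-forms are equivalent if the union of their collections is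
again a continuous closed 1-form. -/
def Equivalent (ω₁ ω₂ : ClosedOneForm X) : Prop :=
  ∀ (i : ω₁.ι) (j : ω₂.ι),
    IsLocallyConstant (fun y : ↥(ω₁.U i ∩ ω₂.U j) => ω₁.f i y - ω₂.f j y)

end ClosedOneForm

section Pre2

open Set

variable {X : Type} [TopologicalSpace X]

namespace ClosedOneForm

/-- `D` is `(N,C)`-movable relative to `B` with respect to `ω`: there is a homotopy of the
inclusion `D ↪ X` keeping `B` inside `B`, such that every point of `D` either ends up in `B`
or travels a distance at most `-N` as measured by `ω`, while the integral along each partial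
trajectory stays bounded by `C`. -/
def IsMovable (ω : ClosedOneForm X) (B D : Set X) (N : ℕ) (C : ℝ) : Prop :=
  B ⊆ D ∧
  ∃ h : X → ℝ → X,
    ContinuousOn (fun p : X × ℝ => h p.1 p.2) (D ×ˢ Icc (0 : ℝ) 1) ∧
    (∀ x ∈ D, h x 0 = x) ∧
    (∀ t ∈ Icc (0 : ℝ) 1, ∀ b ∈ B, h b t ∈ B) ∧
    (∀ x ∈ D, h x 1 ∈ B ∨ ω.intOn (h x) 0 1 ≤ -(N : ℝ)) ∧
    (∀ x ∈ D, ∀ t ∈ Icc (0 : ℝ) 1, ω.intOn (h x) 0 t ≤ C)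

end ClosedOneForm

/-- The inclusion `A ↪ X` is null-homotopic in `X`. -/
def NullhomotopicIncl (A : Set X) : Prop :=
  ∃ (h : X → ℝ → X) (x₀ : X),
    ContinuousOn (fun p : X × ℝ => h p.1 p.2) (A ×ˢ Icc (0 : ℝ) 1) ∧
    (∀ x ∈ A, h x 0 = x) ∧ (∀ x ∈ A, h x 1 = x₀)

namespace ClosedOneForm

/-- There is a `C > 0` such that for every positive integer `N`, the space `X` admits an open
cover by `k` null-homotopic sets and one `(N,C)`-movable set relative to `B`. -/
def CatCoverProp (ω : ClosedOneForm X) (B : Set X) (k : ℕ) : Prop :=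
  ∃ C > (0 : ℝ), ∀ N : ℕ, 0 < N →
    ∃ (U₀ : Set X) (Ui : Fin k → Set X),
      IsOpen U₀ ∧ (∀ i, IsOpen (Ui i)) ∧
      U₀ ∪ (⋃ i, Ui i) = univ ∧
      (∀ i, NullhomotopicIncl (Ui i)) ∧
      ω.IsMovable B U₀ N C

/-- The relative Lusternik–Schnirelmann category `cat(X,B,ω)` of the pair `(X,B)` with respect
to the continuous closed 1-form `ω`. -/
noncomputable def catRel (ω : ClosedOneForm X) (B : Set X) : ℕ :=
  sInf {k | ω.CatCoverProp B k}

end ClosedOneForm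

/-- The classical relative Lusternik–Schnirelmann category `cat(X,B)`: the smallest `k` such
that `X` is covered by `k` open null-homotopic sets and one open set containing `B` which can
be deformed into `B` keeping `B` in `B`. -/
noncomputable def catClassical (X : Type) [TopologicalSpace X] (B : Set X) : ℕ :=
  sInf {k | ∃ (U₀ : Set X) (Ui : Fin k → Set X),
    IsOpen U₀ ∧ (∀ i, IsOpen (Ui i)) ∧
    U₀ ∪ (⋃ i, Ui i) = univ ∧
    (∀ i, NullhomotopicIncl (Ui i)) ∧
    B ⊆ U₀ ∧
    ∃ h : X → ℝ → X,
      ContinuousOn (fun p : X × ℝ => h p.1 p.2) (U₀ ×ˢ Icc (0 : ℝ) 1) ∧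
      (∀ x ∈ U₀, h x 0 = x) ∧
      (∀ t ∈ Icc (0 : ℝ) 1, ∀ b ∈ B, h b t ∈ B) ∧
      (∀ x ∈ U₀, h x 1 ∈ B)}

/-- A finite CW structure on a compact Hausdorff space `X`: a finite family of cells with
continuous characteristic maps defined on closed Euclidean balls, restricting to embeddings
on the open balls, whose images partition `X`, and whose boundary spheres are mapped into
the union of the cells of strictly smaller dimension. -/
structure FiniteCWStructure (X : Type) [TopologicalSpace X] where
  n : ℕ
  dim : Fin n → ℕ
  Φ : (i : Fin n) → (Fin (dim i) → ℝ) → X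
  cont : ∀ i, ContinuousOn (Φ i) (Metric.closedBall 0 1)
  embeds : ∀ i, Topology.IsEmbedding
    (fun x : ↥(Metric.ball (0 : Fin (dim i) → ℝ) 1) => Φ i x)
  cells_cover : (⋃ i, Φ i '' Metric.ball 0 1) = Set.univ
  cells_disjoint : ∀ i j, i ≠ j →
    Disjoint (Φ i '' Metric.ball 0 1) (Φ j '' Metric.ball 0 1)
  boundary : ∀ i, Φ i '' Metric.sphere 0 1 ⊆ ⋃ j ∈ {j | dim j < dim i}, Φ j '' Metric.ball 0 1

/-- `B` is a subcomplex of the finite CW structure `S`: a union of cells which is closed under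
attaching boundaries. -/
def FiniteCWStructure.IsSubcomplex (S : FiniteCWStructure X) (B : Set X) : Prop :=
  ∃ s : Set (Fin S.n),
    B = ⋃ i ∈ s, S.Φ i '' Metric.ball 0 1 ∧
    ∀ i ∈ s, S.Φ i '' Metric.sphere 0 1 ⊆ B

end Pre2


section Aux

open ClosedOneForm

variable {X : Type} [TopologicalSpace X]

/-- The key consequence of equivalence `ω₂ ∼ ω₁ + dF`: on every preconnected subset of a
common chart, `ω₂.f j - ω₁.f i - F` is constant. -/
def EqvOn (ω₁ ω₂ : ClosedOneForm X) (F : X → ℝ) : Prop :=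
  ∀ (i : ω₁.ι) (j : ω₂.ι) (A : Set X), A ⊆ ω₁.U i → A ⊆ ω₂.U j → IsPreconnected A →
    ∀ x ∈ A, ∀ y ∈ A, ω₂.f j y - ω₁.f i y - F y = ω₂.f j x - ω₁.f i x - F x

lemma const_on_of_isLocallyConstant {S : Set X} {g : ↥S → ℝ} (hg : IsLocallyConstant g)
    {A : Set X} (hA : A ⊆ S) (hconn : IsPreconnected A) {x y : X} (hx : x ∈ A) (hy : y ∈ A) :
    g ⟨x, hA hx⟩ = g ⟨y, hA hy⟩ := by
  have himg : (Subtype.val : ↥S → X) '' ((Subtype.val : ↥S → X) ⁻¹' A) = A := by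
    rw [Set.image_preimage_eq_inter_range, Subtype.range_val]
    exact Set.inter_eq_left.2 hA
  have hpre : IsPreconnected ((Subtype.val : ↥S → X) ⁻¹' A) := by
    rw [← Topology.IsInducing.subtypeVal.isPreconnected_image, himg]
    exact hconn
  exact hg.apply_eq_of_isPreconnected hpre hx hy

lemma eqvOn_of_equivalent {ω ω' : ClosedOneForm X} {f : X → ℝ} {hf : Continuous f}
    (h : ω'.Equivalent (ω.addFun f hf)) : EqvOn ω ω' f := by
  intro i j A hA1 hA2 hconn x hx y hy
  have h2 : ω'.f j y - (ω.f i y + f y) = ω'.f j x - (ω.f i x + f x) :=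
    const_on_of_isLocallyConstant (h j i) (Set.subset_inter hA2 hA1) hconn hy hx
  linarith

lemma EqvOn.symm {ω₁ ω₂ : ClosedOneForm X} {F : X → ℝ} (hE : EqvOn ω₁ ω₂ F) :
    EqvOn ω₂ ω₁ (fun x => -F x) := by
  intro i j A h1 h2 hc x hx y hy
  have := hE j i A h2 h1 hc x hx y hy
  show ω₁.f j y - ω₂.f i y - (-F y) = ω₁.f j x - ω₂.f i x - (-F x)
  linarith

lemma partition_mono {t : ℕ → ℝ} {n : ℕ} (ht : ∀ i < n, t i < t (i + 1)) {i j : ℕ}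
    (hij : i ≤ j) (hj : j ≤ n) : t i ≤ t j := by
  induction j with
  | zero =>
    have : i = 0 := by omega
    simp [this]
  | succ j IH =>
    rcases Nat.eq_or_lt_of_le hij with rfl | hlt
    · exact le_rfl
    · exact (IH (by omega) (by omega)).trans (le_of_lt (ht j (by omega)))

/-- The core comparison lemma: any partition sum for `ω₂` equals any partition sum for `ω₁`
plus `F (γ b) - F (γ a)`, when `EqvOn ω₁ ω₂ F` and `γ` is continuous on `[a,b]`. -/
lemma key_sum_eq : ∀ K : ℕ, ∀ (ω₁ ω₂ : ClosedOneForm X) (F : X → ℝ), EqvOn ω₁ ω₂ F →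
    ∀ (n m : ℕ) (a b : ℝ) (γ : ℝ → X) (t s : ℕ → ℝ) (c : ℕ → ω₁.ι) (c' : ℕ → ω₂.ι),
    n + m ≤ K → 0 < n → 0 < m → ContinuousOn γ (Set.Icc a b) →
    t 0 = a → t n = b → (∀ i < n, t i < t (i + 1)) →
    (∀ i < n, Set.MapsTo γ (Set.Icc (t i) (t (i + 1))) (ω₁.U (c i))) →
    s 0 = a → s m = b → (∀ i < m, s i < s (i + 1)) →
    (∀ i < m, Set.MapsTo γ (Set.Icc (s i) (s (i + 1))) (ω₂.U (c' i))) →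
    ∑ i ∈ Finset.range m, (ω₂.f (c' i) (γ (s (i + 1))) - ω₂.f (c' i) (γ (s i))) =
      (∑ i ∈ Finset.range n, (ω₁.f (c i) (γ (t (i + 1))) - ω₁.f (c i) (γ (t i)))) +
        F (γ b) - F (γ a) := by
  intro K
  induction K with
  | zero =>
    intro ω₁ ω₂ F hE n m a b γ t s c c' hK hn hm
    omega
  | succ K IH =>
    intro ω₁ ω₂ F hE n m a b γ t s c c' hK hn hm hγ ht0 htn htinc htmap hs0 hsm hsinc hsmap
    have hta : a ≤ t 1 := ht0 ▸ partition_mono htinc (Nat.zero_le 1) hn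
    have htb : t 1 ≤ b := htn ▸ partition_mono htinc hn le_rfl
    have hsa : a ≤ s 1 := hs0 ▸ partition_mono hsinc (Nat.zero_le 1) hm
    have hsb : s 1 ≤ b := hsm ▸ partition_mono hsinc hm le_rfl
    have hab : a ≤ b := le_trans hta htb
    have hkey : ∀ u : ℝ, a ≤ u → u ≤ t 1 → u ≤ s 1 →
        ω₂.f (c' 0) (γ u) - ω₁.f (c 0) (γ u) - F (γ u)
          = ω₂.f (c' 0) (γ a) - ω₁.f (c 0) (γ a) - F (γ a) := by
      intro u hau hut hus
      have hIcc1 : Set.Icc a u ⊆ Set.Icc (t 0) (t 1) := by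
        rw [ht0]; exact Set.Icc_subset_Icc le_rfl hut
      have hIcc2 : Set.Icc a u ⊆ Set.Icc (s 0) (s 1) := by
        rw [hs0]; exact Set.Icc_subset_Icc le_rfl hus
      have hconn : IsPreconnected (γ '' Set.Icc a u) :=
        isPreconnected_Icc.image γ (hγ.mono (Set.Icc_subset_Icc le_rfl (le_trans hut htb)))
      exact hE (c 0) (c' 0) (γ '' Set.Icc a u)
        (Set.image_subset_iff.2 fun y hy => htmap 0 hn (hIcc1 hy))
        (Set.image_subset_iff.2 fun y hy => hsmap 0 hm (hIcc2 hy))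
        hconn (γ a) ⟨a, ⟨le_rfl, hau⟩, rfl⟩ (γ u) ⟨u, ⟨hau, le_rfl⟩, rfl⟩
    have hgt0 : γ (t 0) = γ a := by rw [ht0]
    have hgs0 : γ (s 0) = γ a := by rw [hs0]
    rcases lt_trichotomy (t 1) (s 1) with hts | hts | hts
    · -- t 1 < s 1 : drop the first `t`-interval, shrink the first `s`-interval
      have hn2 : 2 ≤ n := by
        by_contra hc
        have hn1 : n = 1 := by omega
        rw [hn1] at htn
        linarith
      set s' : ℕ → ℝ := fun i => if i = 0 then t 1 else s i with hs'def
      have hs'0 : s' 0 = t 1 := by simp [hs'def]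
      have hs'one : ∀ i : ℕ, i ≠ 0 → s' i = s i := by
        intro i hi; simp [hs'def, hi]
      have hs'succ : ∀ i : ℕ, s' (i + 1) = s (i + 1) := fun i =>
        hs'one _ (Nat.succ_ne_zero i)
      have IH' :
          ∑ i ∈ Finset.range m, (ω₂.f (c' i) (γ (s' (i + 1))) - ω₂.f (c' i) (γ (s' i))) =
            (∑ i ∈ Finset.range (n - 1),
              (ω₁.f (c (i + 1)) (γ (t (i + 1 + 1))) - ω₁.f (c (i + 1)) (γ (t (i + 1))))) +
              F (γ b) - F (γ (t 1)) := by
        refine IH ω₁ ω₂ F hE (n - 1) m (t 1) b γ (fun i => t (i + 1)) s'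
          (fun i => c (i + 1)) c' (by omega) (by omega) hm
          (hγ.mono (Set.Icc_subset_Icc hta le_rfl)) rfl
          (by show t (n - 1 + 1) = b; rw [show n - 1 + 1 = n by omega]; exact htn)
          (fun i hi => htinc (i + 1) (by omega))
          (fun i hi => htmap (i + 1) (by omega))
          hs'0 ?_ ?_ ?_
        · have hsm' : s' m = s m := by
            rw [show m = m - 1 + 1 by omega]
            exact hs'succ (m - 1)
          rw [hsm']; exact hsm
        · intro i hi
          rw [hs'succ i]
          by_cases h0 : i = 0
          · subst h0
            rw [hs'0]
            exact hts
          · rw [hs'one i h0]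
            exact hsinc i hi
        · intro i hi
          rw [hs'succ i]
          by_cases h0 : i = 0
          · subst h0
            rw [hs'0]
            intro x hx
            exact hsmap 0 hm ⟨by rw [hs0]; linarith [hx.1, hta], hx.2⟩
          · rw [hs'one i h0]
            exact hsmap i hi
      have hS1 : ∑ i ∈ Finset.range n, (ω₁.f (c i) (γ (t (i + 1))) - ω₁.f (c i) (γ (t i)))
          = (∑ i ∈ Finset.range (n - 1),
              (ω₁.f (c (i + 1)) (γ (t (i + 1 + 1))) - ω₁.f (c (i + 1)) (γ (t (i + 1)))))
            + (ω₁.f (c 0) (γ (t 1)) - ω₁.f (c 0) (γ (t 0))) := by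
        conv_lhs => rw [show n = n - 1 + 1 by omega]
        rw [Finset.sum_range_succ']
      have hS2 : ∑ i ∈ Finset.range m, (ω₂.f (c' i) (γ (s (i + 1))) - ω₂.f (c' i) (γ (s i)))
          = (∑ i ∈ Finset.range m, (ω₂.f (c' i) (γ (s' (i + 1))) - ω₂.f (c' i) (γ (s' i))))
            + (ω₂.f (c' 0) (γ (t 1)) - ω₂.f (c' 0) (γ (s 0))) := by
        rw [show m = m - 1 + 1 by omega]
        simp only [Finset.sum_range_succ']
        simp only [hs'succ, hs'0]
        ring
      have hkey0 := hkey (t 1) hta le_rfl (le_of_lt hts)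
      rw [hS2, IH', hS1, hgt0, hgs0]
      linarith
    · -- t 1 = s 1
      by_cases hn1 : n = 1
      · subst hn1
        have hm1 : m = 1 := by
          by_contra hc
          have h2m : 2 ≤ m := by omega
          have hlt : s 1 < s m :=
            lt_of_lt_of_le (hsinc 1 (by omega)) (partition_mono hsinc (by omega) le_rfl)
          rw [hsm] at hlt
          linarith
        subst hm1
        have hkey0 := hkey b hab (le_of_eq htn.symm) (by rw [← hts]; exact le_of_eq htn.symm)
        simp only [Finset.sum_range_one]
        rw [hgt0, hgs0, htn, hsm]
        linarith
      · have hn2 : 2 ≤ n := by omega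
        have ht1b : t 1 < b :=
          lt_of_lt_of_le (htinc 1 (by omega)) (htn ▸ partition_mono htinc (by omega) le_rfl)
        have hm2 : 2 ≤ m := by
          by_contra hc
          have hm1 : m = 1 := by omega
          rw [hm1] at hsm
          linarith
        have IH' :
            ∑ i ∈ Finset.range (m - 1),
                (ω₂.f (c' (i + 1)) (γ (s (i + 1 + 1))) - ω₂.f (c' (i + 1)) (γ (s (i + 1)))) =
              (∑ i ∈ Finset.range (n - 1),
                (ω₁.f (c (i + 1)) (γ (t (i + 1 + 1))) - ω₁.f (c (i + 1)) (γ (t (i + 1))))) +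
                F (γ b) - F (γ (t 1)) :=
          IH ω₁ ω₂ F hE (n - 1) (m - 1) (t 1) b γ (fun i => t (i + 1)) (fun i => s (i + 1))
            (fun i => c (i + 1)) (fun i => c' (i + 1))
            (by omega) (by omega) (by omega) (hγ.mono (Set.Icc_subset_Icc hta le_rfl)) rfl
            (by show t (n - 1 + 1) = b; rw [show n - 1 + 1 = n by omega]; exact htn)
            (fun i hi => htinc (i + 1) (by omega))
            (fun i hi => htmap (i + 1) (by omega))
            hts.symm
            (by show s (m - 1 + 1) = b; rw [show m - 1 + 1 = m by omega]; exact hsm)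
            (fun i hi => hsinc (i + 1) (by omega))
            (fun i hi => hsmap (i + 1) (by omega))
        have hS1 : ∑ i ∈ Finset.range n, (ω₁.f (c i) (γ (t (i + 1))) - ω₁.f (c i) (γ (t i)))
            = (∑ i ∈ Finset.range (n - 1),
                (ω₁.f (c (i + 1)) (γ (t (i + 1 + 1))) - ω₁.f (c (i + 1)) (γ (t (i + 1)))))
              + (ω₁.f (c 0) (γ (t 1)) - ω₁.f (c 0) (γ (t 0))) := by
          conv_lhs => rw [show n = n - 1 + 1 by omega]
          rw [Finset.sum_range_succ']
        have hS2 : ∑ i ∈ Finset.range m, (ω₂.f (c' i) (γ (s (i + 1))) - ω₂.f (c' i) (γ (s i)))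
            = (∑ i ∈ Finset.range (m - 1),
                (ω₂.f (c' (i + 1)) (γ (s (i + 1 + 1))) - ω₂.f (c' (i + 1)) (γ (s (i + 1)))))
              + (ω₂.f (c' 0) (γ (s 1)) - ω₂.f (c' 0) (γ (s 0))) := by
          conv_lhs => rw [show m = m - 1 + 1 by omega]
          rw [Finset.sum_range_succ']
        have hkey0 := hkey (t 1) hta le_rfl (le_of_eq hts)
        have hgs1 : γ (s 1) = γ (t 1) := by rw [← hts]
        rw [hS2, IH', hS1, hgt0, hgs0, hgs1]
        linarith
    · -- s 1 < t 1 : drop the first `s`-interval, shrink the first `t`-interval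
      have hm2 : 2 ≤ m := by
        by_contra hc
        have hm1 : m = 1 := by omega
        rw [hm1] at hsm
        linarith
      set t' : ℕ → ℝ := fun i => if i = 0 then s 1 else t i with ht'def
      have ht'0 : t' 0 = s 1 := by simp [ht'def]
      have ht'one : ∀ i : ℕ, i ≠ 0 → t' i = t i := by
        intro i hi; simp [ht'def, hi]
      have ht'succ : ∀ i : ℕ, t' (i + 1) = t (i + 1) := fun i =>
        ht'one _ (Nat.succ_ne_zero i)
      have IH' :
          ∑ i ∈ Finset.range (m - 1),
              (ω₂.f (c' (i + 1)) (γ (s (i + 1 + 1))) - ω₂.f (c' (i + 1)) (γ (s (i + 1)))) =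
            (∑ i ∈ Finset.range n,
              (ω₁.f (c i) (γ (t' (i + 1))) - ω₁.f (c i) (γ (t' i)))) +
              F (γ b) - F (γ (s 1)) := by
        refine IH ω₁ ω₂ F hE n (m - 1) (s 1) b γ t' (fun i => s (i + 1)) c
          (fun i => c' (i + 1)) (by omega) hn (by omega)
          (hγ.mono (Set.Icc_subset_Icc hsa le_rfl)) ht'0
          (by rw [ht'one n (by omega)]; exact htn) ?_ ?_ rfl
          (by show s (m - 1 + 1) = b; rw [show m - 1 + 1 = m by omega]; exact hsm)
          (fun i hi => hsinc (i + 1) (by omega))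
          (fun i hi => hsmap (i + 1) (by omega))
        · intro i hi
          rw [ht'succ i]
          by_cases h0 : i = 0
          · subst h0
            rw [ht'0]
            exact hts
          · rw [ht'one i h0]
            exact htinc i hi
        · intro i hi
          rw [ht'succ i]
          by_cases h0 : i = 0
          · subst h0
            rw [ht'0]
            intro x hx
            exact htmap 0 hn ⟨by rw [ht0]; linarith [hx.1, hsa], hx.2⟩
          · rw [ht'one i h0]
            exact htmap i hi
      have hS1 : ∑ i ∈ Finset.range n, (ω₁.f (c i) (γ (t (i + 1))) - ω₁.f (c i) (γ (t i)))
          = (∑ i ∈ Finset.range n, (ω₁.f (c i) (γ (t' (i + 1))) - ω₁.f (c i) (γ (t' i))))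
            + (ω₁.f (c 0) (γ (s 1)) - ω₁.f (c 0) (γ (t 0))) := by
        rw [show n = n - 1 + 1 by omega]
        simp only [Finset.sum_range_succ']
        simp only [ht'succ, ht'0]
        ring
      have hS2 : ∑ i ∈ Finset.range m, (ω₂.f (c' i) (γ (s (i + 1))) - ω₂.f (c' i) (γ (s i)))
          = (∑ i ∈ Finset.range (m - 1),
              (ω₂.f (c' (i + 1)) (γ (s (i + 1 + 1))) - ω₂.f (c' (i + 1)) (γ (s (i + 1)))))
            + (ω₂.f (c' 0) (γ (s 1)) - ω₂.f (c' 0) (γ (s 0))) := by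
        conv_lhs => rw [show m = m - 1 + 1 by omega]
        rw [Finset.sum_range_succ']
      have hkey0 := hkey (s 1) hsa (le_of_lt hts) le_rfl
      rw [hS2, IH', hS1, hgt0, hgs0]
      linarith

/-- Existence of a partition subordinate to the cover of `ω`, for a continuous path. -/
lemma exists_isIntegralOn (ω : ClosedOneForm X) (γ : ℝ → X) (a b : ℝ) (hab : a < b)
    (hγ : ContinuousOn γ (Set.Icc a b)) : ∃ r, ω.IsIntegralOn γ a b r := by
  have h1 : ∀ x : ↥(Set.Icc a b), ∃ (V : Set ℝ) (i : ω.ι), IsOpen V ∧ x.1 ∈ V ∧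
      ∀ y, y ∈ V → y ∈ Set.Icc a b → γ y ∈ ω.U i := by
    rintro ⟨x, hx⟩
    obtain ⟨i, hi⟩ := ω.covers (γ x)
    have hmem : γ ⁻¹' ω.U i ∈ nhdsWithin x (Set.Icc a b) :=
      (hγ x hx).preimage_mem_nhdsWithin ((ω.isOpen i).mem_nhds hi)
    rw [mem_nhdsWithin] at hmem
    obtain ⟨V, hVo, hxV, hV⟩ := hmem
    exact ⟨V, i, hVo, hxV, fun y hy hy' => hV ⟨hy, hy'⟩⟩
  choose V idx hVo hmemV hsubV using h1
  obtain ⟨δ, hδ, hleb⟩ := lebesgue_number_lemma_of_metric isCompact_Icc hVo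
    (fun x hx => Set.mem_iUnion.2 ⟨⟨x, hx⟩, hmemV ⟨x, hx⟩⟩)
  obtain ⟨k, hk⟩ := exists_nat_gt ((b - a) / δ)
  have hk0 : 0 < k := by
    by_contra hc
    have hk00 : k = 0 := by omega
    rw [hk00] at hk
    simp only [Nat.cast_zero] at hk
    have : 0 < (b - a) / δ := div_pos (by linarith) hδ
    linarith
  have hkR : (0 : ℝ) < k := Nat.cast_pos.2 hk0
  set ε : ℝ := (b - a) / k with hε_def
  have hε : 0 < ε := div_pos (by linarith) hkR
  have hkε : (k : ℝ) * ε = b - a := by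
    rw [hε_def]
    field_simp
  have hεδ : ε < δ := by
    rw [hε_def, div_lt_iff₀ hkR]
    rw [div_lt_iff₀ hδ] at hk
    linarith
  set t : ℕ → ℝ := fun i => a + i * ε with ht_def
  have htinc : ∀ i : ℕ, t i < t (i + 1) := by
    intro i
    simp only [ht_def]
    push_cast
    nlinarith [hε]
  have htmem : ∀ i ≤ k, t i ∈ Set.Icc a b := by
    intro i hi
    constructor
    · simp only [ht_def]
      nlinarith [hε, (Nat.cast_nonneg i : (0:ℝ) ≤ i)]
    · simp only [ht_def]
      have : (i : ℝ) * ε ≤ (k : ℝ) * ε :=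
        mul_le_mul_of_nonneg_right (Nat.cast_le.2 hi) (le_of_lt hε)
      linarith [hkε]
  have h2 : ∀ i, i < k → ∃ j : ω.ι, Set.MapsTo γ (Set.Icc (t i) (t (i + 1))) (ω.U j) := by
    intro i hi
    obtain ⟨x, hx⟩ := hleb (t i) (htmem i hi.le)
    refine ⟨idx x, fun y hy => ?_⟩
    have hyI : y ∈ Set.Icc a b :=
      ⟨le_trans (htmem i hi.le).1 hy.1, le_trans hy.2 (htmem (i + 1) hi).2⟩
    refine hsubV x y (hx ?_) hyI
    rw [Metric.mem_ball, Real.dist_eq, abs_of_nonneg (by linarith [hy.1])]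
    have hstep : t (i + 1) - t i = ε := by
      simp only [ht_def]
      push_cast
      ring
    linarith [hy.2, hstep]
  choose g hg using h2
  refine ⟨_, k, t, fun i => if h : i < k then g i h else g 0 hk0, hk0, by simp [ht_def], ?_, ?_,
    ?_, rfl⟩
  · simp only [ht_def]
    linarith [hkε]
  · intro i _
    exact htinc i
  · intro i hi
    have hfi : (fun i => if h : i < k then g i h else g 0 hk0) i = g i hi := by
      simp [hi]
    rw [hfi]
    exact hg i hi

lemma intOn_eq_of_eqvOn {ω₁ ω₂ : ClosedOneForm X} {F : X → ℝ} (hE : EqvOn ω₁ ω₂ F)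
    {γ : ℝ → X} {a b : ℝ} (hab : a ≤ b) (hγ : ContinuousOn γ (Set.Icc a b)) :
    ω₂.intOn γ a b = ω₁.intOn γ a b + F (γ b) - F (γ a) := by
  rcases eq_or_lt_of_le hab with rfl | hab'
  · have h0 : ∀ ω : ClosedOneForm X, ¬ ∃ r, ω.IsIntegralOn γ a a r := by
      rintro ω ⟨r, n, t, c, hn, ht0, htn, htinc, -, -⟩
      have : t 0 < t n := lt_of_lt_of_le (htinc 0 hn) (partition_mono htinc hn le_rfl)
      rw [ht0, htn] at this
      exact lt_irrefl a this
    simp only [ClosedOneForm.intOn]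
    rw [dif_neg (h0 ω₂), dif_neg (h0 ω₁)]
    ring
  · have hex₁ : ∃ r, ω₁.IsIntegralOn γ a b r := exists_isIntegralOn ω₁ γ a b hab' hγ
    have hex₂ : ∃ r, ω₂.IsIntegralOn γ a b r := exists_isIntegralOn ω₂ γ a b hab' hγ
    simp only [ClosedOneForm.intOn]
    rw [dif_pos hex₂, dif_pos hex₁]
    obtain ⟨n, t, c, hn, ht0, htn, htinc, htmap, hsum₁⟩ := hex₁.choose_spec
    obtain ⟨m, s, c', hm, hs0, hsm, hsinc, hsmap, hsum₂⟩ := hex₂.choose_spec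
    rw [hsum₁, hsum₂]
    exact key_sum_eq (n + m) ω₁ ω₂ F hE n m a b γ t s c c' le_rfl hn hm hγ ht0 htn htinc htmap
      hs0 hsm hsinc hsmap

lemma isMovable_transfer {ω₁ ω₂ : ClosedOneForm X} {F : X → ℝ} (hE : EqvOn ω₁ ω₂ F)
    {M : ℝ} (hM : ∀ x, |F x| ≤ M) {B D : Set X} {N N' : ℕ} {C : ℝ}
    (hNN' : (N : ℝ) + 2 * M ≤ N') (hmov : ω₁.IsMovable B D N' C) :
    ω₂.IsMovable B D N (C + 2 * M) := by
  obtain ⟨hBD, h, hcont, h0, hBB, hend, hbd⟩ := hmov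
  have hcγ : ∀ x ∈ D, ∀ t ∈ Set.Icc (0 : ℝ) 1, ContinuousOn (h x) (Set.Icc 0 t) := by
    intro x hx t ht
    have h1 : ContinuousOn (h x) (Set.Icc (0 : ℝ) 1) :=
      hcont.comp ((continuous_const.prodMk continuous_id).continuousOn)
        (fun u hu => ⟨hx, hu⟩)
    exact h1.mono (Set.Icc_subset_Icc le_rfl ht.2)
  refine ⟨hBD, h, hcont, h0, hBB, ?_, ?_⟩
  · intro x hx
    rcases hend x hx with h1 | h1
    · exact Or.inl h1
    · right
      rw [intOn_eq_of_eqvOn hE zero_le_one (hcγ x hx 1 ⟨zero_le_one, le_rfl⟩)]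
      have ha1 := abs_le.1 (hM (h x 1))
      have ha0 := abs_le.1 (hM (h x 0))
      linarith [ha1.1, ha1.2, ha0.1, ha0.2]
  · intro x hx t ht
    rw [intOn_eq_of_eqvOn hE ht.1 (hcγ x hx t ht)]
    have ha1 := abs_le.1 (hM (h x t))
    have ha0 := abs_le.1 (hM (h x 0))
    linarith [hbd x hx t ht, ha1.1, ha1.2, ha0.1, ha0.2]

lemma catCoverProp_transfer [CompactSpace X] {ω₁ ω₂ : ClosedOneForm X} {F : X → ℝ}
    (hF : Continuous F) (hE : EqvOn ω₁ ω₂ F) {B : Set X} {k : ℕ}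
    (hcat : ω₁.CatCoverProp B k) : ω₂.CatCoverProp B k := by
  obtain ⟨M₀, hM₀⟩ : ∃ M₀, ∀ x : X, |F x| ≤ M₀ := by
    obtain ⟨M₀, hM₀⟩ := (isCompact_range (continuous_abs.comp hF)).bddAbove
    exact ⟨M₀, fun x => hM₀ (Set.mem_range_self x)⟩
  have hM : ∀ x, |F x| ≤ max M₀ 0 := fun x => le_trans (hM₀ x) (le_max_left _ _)
  have hM0 : (0 : ℝ) ≤ max M₀ 0 := le_max_right _ _
  obtain ⟨C, hC, hP⟩ := hcat
  refine ⟨C + 2 * max M₀ 0, by linarith, fun N hN => ?_⟩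
  obtain ⟨U₀, Ui, ho, hoi, hcov, hnull, hmov⟩ :=
    hP (N + Nat.ceil (2 * max M₀ 0)) (Nat.lt_add_right _ hN)
  refine ⟨U₀, Ui, ho, hoi, hcov, hnull, isMovable_transfer hE hM ?_ hmov⟩
  have h1 : 2 * max M₀ 0 ≤ (Nat.ceil (2 * max M₀ 0) : ℝ) := Nat.le_ceil _
  push_cast
  linarith

end Aux



/-- If `ω'` is equivalent to `ω + df` for some continuous `f : X → ℝ`, then
`cat(X,B,ω) = cat(X,B,ω')`; in particular `cat(X,B,ω)` only depends on the cohomology class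
of `ω`. -/
theorem catRel_eq_of_equivalent_addFun
    {X : Type} [TopologicalSpace X] [T2Space X] [CompactSpace X]
    (S : FiniteCWStructure X) (B : Set X) (hB : S.IsSubcomplex B)
    (ω ω' : ClosedOneForm X) (f : X → ℝ) (hf : Continuous f)
    (h : ω'.Equivalent (ω.addFun f hf)) :
    ω.catRel B = ω'.catRel B := by
  have hE : EqvOn ω ω' f := eqvOn_of_equivalent h
  have hE' : EqvOn ω' ω (fun x => -f x) := hE.symm
  unfold ClosedOneForm.catRel
  congr 1
  ext k
  simp only [Set.mem_setOf_eq]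
  exact ⟨catCoverProp_transfer hf hE, catCoverProp_transfer hf.neg hE'⟩
end

section
/- Let (X,B) be a finite CW pair and f : X → ℝ a continuous function. Then cat(X,B,df) = cat(X,B), where df = {f} is the exact continuous closed 1-form determined by f and cat(X,B) is the classical relative Lusternik-Schnirelmann category of the pair (X,B). -/
open Set

lemma ofFun_isIntegralOn_eq {X : Type} [TopologicalSpace X] {f : X → ℝ} {hf : Continuous f}
    {γ : ℝ → X} {a b r : ℝ} (h : (ClosedOneForm.ofFun f hf).IsIntegralOn γ a b r) :
    r = f (γ b) - f (γ a) := by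
  obtain ⟨n, t, c, hn, h0, hnb, _, _, hr⟩ := h
  have hfc : ∀ i, (ClosedOneForm.ofFun f hf).f (c i) = f := fun _ => rfl
  rw [hr]
  simp only [hfc]
  rw [Finset.sum_range_sub (fun i => f (γ (t i))), h0, hnb]

lemma ofFun_intOn_cases {X : Type} [TopologicalSpace X] {f : X → ℝ} {hf : Continuous f}
    (γ : ℝ → X) (a b : ℝ) :
    (ClosedOneForm.ofFun f hf).intOn γ a b = 0 ∨
      (ClosedOneForm.ofFun f hf).intOn γ a b = f (γ b) - f (γ a) := by
  classical
  unfold ClosedOneForm.intOn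
  split
  · rename_i h
    exact Or.inr (ofFun_isIntegralOn_eq h.choose_spec)
  · exact Or.inl rfl


/-- For an exact continuous closed 1-form `df`, the category
`cat(X,B,df)` coincides with the classical relative Lusternik–Schnirelmann category
`cat(X,B)`. -/
theorem catRel_ofFun_eq_catClassical
    {X : Type} [TopologicalSpace X] [T2Space X] [CompactSpace X]
    (S : FiniteCWStructure X) (B : Set X) (hB : S.IsSubcomplex B)
    (f : X → ℝ) (hf : Continuous f) :
    (ClosedOneForm.ofFun f hf).catRel B = catClassical X B := by
  classical
  obtain ⟨A, hA⟩ : ∃ A, ∀ x : X, f x ≤ A := by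
    obtain ⟨A, hA⟩ := (isCompact_range hf).bddAbove
    exact ⟨A, fun x => hA (Set.mem_range_self x)⟩
  obtain ⟨a₀, ha₀⟩ : ∃ a, ∀ x : X, a ≤ f x := by
    obtain ⟨a, ha⟩ := (isCompact_range hf).bddBelow
    exact ⟨a, fun x => ha (Set.mem_range_self x)⟩
  unfold ClosedOneForm.catRel catClassical
  congr 1
  ext k
  simp only [Set.mem_setOf_eq]
  constructor
  · rintro ⟨C, hC, hprop⟩
    obtain ⟨U₀, Ui, hU₀o, hUio, hcov, hnull, hBsub, h, hcont, hh0, hhB, hend, hbound⟩ :=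
      hprop (⌈A - a₀⌉₊ + 1) (Nat.succ_pos _)
    refine ⟨U₀, Ui, hU₀o, hUio, hcov, hnull, hBsub, h, hcont, hh0, hhB, fun x hx => ?_⟩
    rcases hend x hx with h1 | h2
    · exact h1
    · exfalso
      have hN : (A - a₀ + 1 : ℝ) ≤ ((⌈A - a₀⌉₊ + 1 : ℕ) : ℝ) := by
        push_cast
        have := Nat.le_ceil (A - a₀)
        linarith
      have hb1 : a₀ ≤ f (h x 1) := ha₀ _
      have hb0 : f (h x 0) ≤ A := hA _
      rcases ofFun_intOn_cases (hf := hf) (h x) 0 1 with h0 | h0 <;> rw [h0] at h2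
      · have : (0:ℝ) < ((⌈A - a₀⌉₊ + 1 : ℕ) : ℝ) := by positivity
        linarith
      · linarith
  · rintro ⟨U₀, Ui, hU₀o, hUio, hcov, hnull, hBsub, h, hcont, hh0, hhB, hend⟩
    refine ⟨max 1 (A - a₀), lt_of_lt_of_le one_pos (le_max_left _ _), fun N _ => ?_⟩
    refine ⟨U₀, Ui, hU₀o, hUio, hcov, hnull, hBsub, h, hcont, hh0, hhB,
      fun x hx => Or.inl (hend x hx), fun x hx t ht => ?_⟩
    rcases ofFun_intOn_cases (hf := hf) (h x) 0 t with h0 | h0 <;> rw [h0]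
    · exact le_trans zero_le_one (le_max_left _ _)
    · have hb1 : f (h x t) ≤ A := hA _
      have hb0 : a₀ ≤ f (h x 0) := ha₀ _
      have : f (h x t) - f (h x 0) ≤ A - a₀ := by linarith
      exact le_trans this (le_max_right _ _)
end

section
/- Let ω = {f_U}_{U∈𝒰} be a continuous closed 1-form on a topological space X and γ : [0,1] → X a continuous path. For any two partitions 0 = t_0 < t_1 < ⋯ < t_n = 1 and 0 = s_0 < s_1 < ⋯ < s_m = 1 together with choices U_0, …, U_{n−1} ∈ 𝒰 and V_0, …, V_{m−1} ∈ 𝒰 satisfying γ([t_i, t_{i+1}]) ⊆ U_i for all i and γ([s_j, s_{j+1}]) ⊆ V_j for all j, one has Σ_{i=0}^{n−1} (f_{U_i}(γ(t_{i+1})) − f_{U_i}(γ(t_i))) = Σ_{j=0}^{m−1} (f_{V_j}(γ(s_{j+1})) − f_{V_j}(γ(s_j))). Moreover, at least one such partition with such choices exists. Hence the line integral ∫_γ ω is well defined. -/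
open Set

section LIAux

private lemma LI_mono_lt {t : ℕ → ℝ} {n : ℕ} (ht : ∀ i < n, t i < t (i + 1)) :
    ∀ {i j : ℕ}, i < j → j ≤ n → t i < t j := by
  intro i j hij hjn
  induction j with
  | zero => omega
  | succ j ih =>
    rcases Nat.lt_succ_iff_lt_or_eq.1 hij with h | h
    · exact (ih h (by omega)).trans (ht j (by omega))
    · subst h; exact ht i (by omega)

private lemma LI_mono_le {t : ℕ → ℝ} {n : ℕ} (ht : ∀ i < n, t i < t (i + 1)) :
    ∀ {i j : ℕ}, i ≤ j → j ≤ n → t i ≤ t j := by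
  intro i j hij hjn
  rcases eq_or_lt_of_le hij with rfl | h
  · exact le_rfl
  · exact (LI_mono_lt ht h hjn).le

private lemma LI_key {X : Type} [TopologicalSpace X] (ω : ClosedOneForm X) {γ : ℝ → X}
    {a b : ℝ} (hab : a ≤ b) (hγ : ContinuousOn γ (Set.Icc a b)) (i j : ω.ι)
    (hi : Set.MapsTo γ (Set.Icc a b) (ω.U i)) (hj : Set.MapsTo γ (Set.Icc a b) (ω.U j)) :
    ω.f i (γ b) - ω.f i (γ a) = ω.f j (γ b) - ω.f j (γ a) := by
  have hmem_a : a ∈ Set.Icc a b := ⟨le_refl a, hab⟩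
  have hmem_b : b ∈ Set.Icc a b := ⟨hab, le_refl b⟩
  have hgc : Continuous (fun x : Set.Icc a b => (⟨γ x, hi x.2, hj x.2⟩ : ↥(ω.U i ∩ ω.U j))) :=
    Continuous.subtype_mk (continuousOn_iff_continuous_restrict.1 hγ) _
  have hlc : IsLocallyConstant (fun x : Set.Icc a b => ω.f i (γ x) - ω.f j (γ x)) :=
    (ω.locConst i j).comp_continuous hgc
  haveI : PreconnectedSpace (Set.Icc a b) := Subtype.preconnectedSpace isPreconnected_Icc
  have h := hlc.apply_eq_of_preconnectedSpace ⟨b, hmem_b⟩ ⟨a, hmem_a⟩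
  have h' : ω.f i (γ b) - ω.f j (γ b) = ω.f i (γ a) - ω.f j (γ a) := h
  linarith

private lemma LI_aux {X : Type} [TopologicalSpace X] (ω : ClosedOneForm X) (γ : ℝ → X) :
    ∀ N : ℕ, ∀ n m : ℕ, n + m ≤ N → ∀ (t s : ℕ → ℝ) (c d : ℕ → ω.ι) (a b : ℝ),
    ContinuousOn γ (Set.Icc a b) →
    0 < n → t 0 = a → t n = b → (∀ i < n, t i < t (i + 1)) →
    (∀ i < n, Set.MapsTo γ (Set.Icc (t i) (t (i + 1))) (ω.U (c i))) →
    0 < m → s 0 = a → s m = b → (∀ i < m, s i < s (i + 1)) →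
    (∀ i < m, Set.MapsTo γ (Set.Icc (s i) (s (i + 1))) (ω.U (d i))) →
    ∑ i ∈ Finset.range n, (ω.f (c i) (γ (t (i + 1))) - ω.f (c i) (γ (t i))) =
      ∑ i ∈ Finset.range m, (ω.f (d i) (γ (s (i + 1))) - ω.f (d i) (γ (s i))) := by
  intro N
  induction N with
  | zero => intro n m hnm t s c d a b hγ hn; exact absurd hn (by omega)
  | succ N ih =>
    intro n m hnm t s c d a b hγ hn ht0 htn htlt htm hm hs0 hsn hslt hsm
    have hat1 : a < t 1 := by rw [← ht0]; exact htlt 0 hn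
    have has1 : a < s 1 := by rw [← hs0]; exact hslt 0 hm
    have ht1b : t 1 ≤ b := by rw [← htn]; exact LI_mono_le htlt hn le_rfl
    have hs1b : s 1 ≤ b := by rw [← hsn]; exact LI_mono_le hslt hm le_rfl
    have hab : a < b := lt_of_lt_of_le hat1 ht1b
    rcases lt_trichotomy (t 1) (s 1) with h | h | h
    · -- t 1 < s 1 : insert t 1 into the s-partition and recurse
      have hn2 : 1 < n := by
        by_contra hc
        have hne : n = 1 := by omega
        rw [hne] at htn; rw [htn] at h; exact absurd hs1b (not_le.2 h)
      obtain ⟨n', rfl⟩ : ∃ n', n = n' + 1 := ⟨n - 1, by omega⟩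
      set s' : ℕ → ℝ := fun k => if k = 0 then t 1 else s k with hs'def
      have htail := ih n' m (by omega) (fun k => t (k + 1)) s' (fun k => c (k + 1)) d (t 1) b
        (hγ.mono (Set.Icc_subset_Icc_left hat1.le))
        (by omega) rfl (by simpa using htn)
        (fun i hi => htlt (i + 1) (by omega))
        (fun i hi => htm (i + 1) (by omega))
        hm
        (by simp [hs'def])
        (by simp only [hs'def]; rw [if_neg (by omega)]; exact hsn)
        (fun i hi => by
          rcases Nat.eq_zero_or_pos i with rfl | hpos
          · simp only [hs'def, if_pos rfl, if_neg Nat.one_ne_zero]; exact h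
          · simp only [hs'def, if_neg (by omega : i ≠ 0), if_neg (by omega : i + 1 ≠ 0)]
            exact hslt i hi)
        (fun i hi => by
          rcases Nat.eq_zero_or_pos i with rfl | hpos
          · simp only [hs'def, if_pos rfl, if_neg Nat.one_ne_zero]
            exact (hsm 0 hm).mono_left
              (Set.Icc_subset_Icc_left (by rw [hs0]; exact hat1.le))
          · simp only [hs'def, if_neg (by omega : i ≠ 0), if_neg (by omega : i + 1 ≠ 0)]
            exact hsm i hi)
      obtain ⟨m', rfl⟩ : ∃ m', m = m' + 1 := ⟨m - 1, by omega⟩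
      rw [Finset.sum_range_succ'] at htail ⊢
      rw [Finset.sum_range_succ' (fun i => ω.f (d i) (γ (s (i + 1))) - ω.f (d i) (γ (s i))) m']
      have hsx : ∀ k : ℕ, s' (k + 1) = s (k + 1) := fun k => if_neg (Nat.succ_ne_zero k)
      have hsz : s' 0 = t 1 := if_pos rfl
      simp only [hsx, hsz, zero_add] at htail
      simp only [zero_add]
      have hkey : ω.f (c 0) (γ (t 1)) - ω.f (c 0) (γ a)
          = ω.f (d 0) (γ (t 1)) - ω.f (d 0) (γ a) := by
        refine LI_key ω hat1.le (hγ.mono (Set.Icc_subset_Icc_right ht1b)) (c 0) (d 0) ?_ ?_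
        · have := htm 0 hn; rwa [ht0] at this
        · refine (hsm 0 hm).mono_left ?_
          rw [hs0]; exact Set.Icc_subset_Icc_right h.le
      rw [ht0, hs0]
      linarith
    · -- t 1 = s 1
      by_cases hn1 : n = 1
      · have ht1 : t 1 = b := hn1 ▸ htn
        have hm1 : m = 1 := by
          by_contra hm1
          have h2 : 1 < m := by omega
          have := LI_mono_lt hslt h2 le_rfl
          rw [hsn, ← h, ht1] at this
          exact lt_irrefl b this
        have hs1 : s 1 = b := hm1 ▸ hsn
        simp only [hn1, hm1, Finset.sum_range_one]
        rw [ht0, hs0, ht1, hs1]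
        refine LI_key ω hab.le hγ (c 0) (d 0) ?_ ?_
        · have := htm 0 hn; rwa [ht0, ht1] at this
        · have := hsm 0 hm; rwa [hs0, hs1] at this
      · have hn2 : 1 < n := by omega
        have ht1b' : t 1 < b := by rw [← htn]; exact LI_mono_lt htlt hn2 le_rfl
        have hm2 : 1 < m := by
          by_contra hm1
          have hme : m = 1 := by omega
          rw [hme] at hsn; rw [hsn] at h
          rw [h] at ht1b'; exact lt_irrefl b ht1b'
        obtain ⟨n', rfl⟩ : ∃ n', n = n' + 1 := ⟨n - 1, by omega⟩
        obtain ⟨m', rfl⟩ : ∃ m', m = m' + 1 := ⟨m - 1, by omega⟩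
        have htail := ih n' m' (by omega) (fun k => t (k + 1)) (fun k => s (k + 1))
          (fun k => c (k + 1)) (fun k => d (k + 1)) (t 1) b
          (hγ.mono (Set.Icc_subset_Icc_left hat1.le))
          (by omega) rfl (by simpa using htn)
          (fun i hi => htlt (i + 1) (by omega))
          (fun i hi => htm (i + 1) (by omega))
          (by omega) h.symm (by simpa using hsn)
          (fun i hi => hslt (i + 1) (by omega))
          (fun i hi => hsm (i + 1) (by omega))
        rw [Finset.sum_range_succ', Finset.sum_range_succ'
          (fun i => ω.f (d i) (γ (s (i + 1))) - ω.f (d i) (γ (s i))) m']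
        have hkey : ω.f (c 0) (γ (t 1)) - ω.f (c 0) (γ a)
            = ω.f (d 0) (γ (s 1)) - ω.f (d 0) (γ a) := by
          rw [← h]
          refine LI_key ω hat1.le (hγ.mono (Set.Icc_subset_Icc_right ht1b)) (c 0) (d 0) ?_ ?_
          · have := htm 0 hn; rwa [ht0] at this
          · have := hsm 0 hm; rw [hs0, ← h] at this; exact this
        rw [ht0, hs0]
        linarith
    · -- s 1 < t 1 : symmetric to the first case
      have hm2 : 1 < m := by
        by_contra hc
        have hme : m = 1 := by omega
        rw [hme] at hsn; rw [hsn] at h; exact absurd ht1b (not_le.2 h)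
      obtain ⟨m', rfl⟩ : ∃ m', m = m' + 1 := ⟨m - 1, by omega⟩
      set t' : ℕ → ℝ := fun k => if k = 0 then s 1 else t k with ht'def
      have htail := ih m' n (by omega) (fun k => s (k + 1)) t' (fun k => d (k + 1)) c (s 1) b
        (hγ.mono (Set.Icc_subset_Icc_left has1.le))
        (by omega) rfl (by simpa using hsn)
        (fun i hi => hslt (i + 1) (by omega))
        (fun i hi => hsm (i + 1) (by omega))
        hn
        (by simp [ht'def])
        (by simp only [ht'def]; rw [if_neg (by omega)]; exact htn)
        (fun i hi => by
          rcases Nat.eq_zero_or_pos i with rfl | hpos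
          · simp only [ht'def, if_pos rfl, if_neg Nat.one_ne_zero]; exact h
          · simp only [ht'def, if_neg (by omega : i ≠ 0), if_neg (by omega : i + 1 ≠ 0)]
            exact htlt i hi)
        (fun i hi => by
          rcases Nat.eq_zero_or_pos i with rfl | hpos
          · simp only [ht'def, if_pos rfl, if_neg Nat.one_ne_zero]
            exact (htm 0 hn).mono_left
              (Set.Icc_subset_Icc_left (by rw [ht0]; exact has1.le))
          · simp only [ht'def, if_neg (by omega : i ≠ 0), if_neg (by omega : i + 1 ≠ 0)]
            exact htm i hi)
      obtain ⟨n', rfl⟩ : ∃ n', n = n' + 1 :=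
        ⟨n - 1, by omega⟩
      rw [Finset.sum_range_succ'] at htail
      rw [Finset.sum_range_succ', Finset.sum_range_succ'
        (fun i => ω.f (d i) (γ (s (i + 1))) - ω.f (d i) (γ (s i))) m']
      have htx : ∀ k : ℕ, t' (k + 1) = t (k + 1) := fun k => if_neg (Nat.succ_ne_zero k)
      have htz : t' 0 = s 1 := if_pos rfl
      simp only [htx, htz, zero_add] at htail
      simp only [zero_add]
      have hkey : ω.f (d 0) (γ (s 1)) - ω.f (d 0) (γ a)
          = ω.f (c 0) (γ (s 1)) - ω.f (c 0) (γ a) := by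
        refine LI_key ω has1.le (hγ.mono (Set.Icc_subset_Icc_right hs1b)) (d 0) (c 0) ?_ ?_
        · have := hsm 0 (by omega); rwa [hs0] at this
        · refine (htm 0 (by omega)).mono_left ?_
          rw [ht0]; exact Set.Icc_subset_Icc_right h.le
      rw [ht0, hs0]
      linarith

end LIAux

/-- Well-definedness of the line integral: for a continuous path
`γ : [0,1] → X` there exists a partition with admissible choices of cover members, and any
two such partitions give the same sum.  (In `ClosedOneForm.IsIntegralOn`, the real number `r`
is by definition the sum `Σ_i (f_{U_i}(γ(t_{i+1})) − f_{U_i}(γ(t_i)))` over a partition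
`0 = t_0 < ⋯ < t_n = 1` with `γ([t_i,t_{i+1}]) ⊆ U_i`.) -/
theorem lineIntegral_wellDefined
    {X : Type} [TopologicalSpace X] (ω : ClosedOneForm X)
    (γ : ℝ → X) (hγ : ContinuousOn γ (Set.Icc 0 1)) :
    (∃ r : ℝ, ω.IsIntegralOn γ 0 1 r) ∧
      (∀ r s : ℝ, ω.IsIntegralOn γ 0 1 r → ω.IsIntegralOn γ 0 1 s → r = s) := by
  constructor
  · -- existence, via the Lebesgue number lemma
    classical
    haveI hne : Nonempty ω.ι := ⟨(ω.covers (γ 0)).choose⟩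
    set γ' : ℝ → X := fun x => γ (Set.projIcc (0 : ℝ) 1 zero_le_one x) with hγ'def
    have hγ'c : Continuous γ' :=
      hγ.comp_continuous (continuous_subtype_val.comp continuous_projIcc)
        (fun x => (Set.projIcc (0 : ℝ) 1 zero_le_one x).2)
    have hγ'eq : ∀ u ∈ Set.Icc (0 : ℝ) 1, γ' u = γ u := by
      intro u hu
      simp only [hγ'def, Set.projIcc_of_mem zero_le_one hu]
    have hcov : Set.Icc (0 : ℝ) 1 ⊆ ⋃ i, γ' ⁻¹' (ω.U i) := by
      intro x _
      obtain ⟨i, hi⟩ := ω.covers (γ' x)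
      exact Set.mem_iUnion.2 ⟨i, hi⟩
    obtain ⟨δ, hδ, hball⟩ := lebesgue_number_lemma_of_metric isCompact_Icc
      (fun i => (ω.isOpen i).preimage hγ'c) hcov
    obtain ⟨k, hk⟩ := exists_nat_one_div_lt hδ
    set n : ℕ := k + 1 with hndef
    have hncast : ((n : ℝ)) = (k : ℝ) + 1 := by push_cast [hndef]; ring
    have hnpos : (0 : ℝ) < (n : ℝ) := by positivity
    set t : ℕ → ℝ := fun i => (i : ℝ) / n with htdef
    have htmem : ∀ i ≤ n, t i ∈ Set.Icc (0 : ℝ) 1 := by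
      intro i hi
      constructor
      · positivity
      · rw [htdef, div_le_one hnpos]
        exact_mod_cast hi
    have hkey : ∀ i : ℕ, ∃ j : ω.ι,
        i < n → Set.MapsTo γ (Set.Icc (t i) (t (i + 1))) (ω.U j) := by
      intro i
      by_cases hi : i < n
      · obtain ⟨j, hj⟩ := hball (t i) (htmem i hi.le)
        refine ⟨j, fun _ => ?_⟩
        intro u hu
        have hu01 : u ∈ Set.Icc (0 : ℝ) 1 :=
          ⟨le_trans (htmem i hi.le).1 hu.1, le_trans hu.2 (htmem (i + 1) hi).2⟩
        have hstep : t (i + 1) - t i = 1 / n := by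
          rw [htdef]; push_cast; ring
        have humem : u ∈ Metric.ball (t i) δ := by
          rw [Metric.mem_ball, Real.dist_eq, abs_of_nonneg (sub_nonneg.2 hu.1)]
          have h1 : u - t i ≤ 1 / n := by
            have := hu.2
            linarith [hstep]
          have h2 : (1 : ℝ) / n < δ := by
            rw [hncast]; exact hk
          linarith
        have : γ' u ∈ ω.U j := hj humem
        rwa [hγ'eq u hu01] at this
      · exact ⟨Classical.arbitrary ω.ι, fun h => absurd h hi⟩
    choose c hc using hkey
    refine ⟨_, n, t, c, Nat.succ_pos k, by simp [htdef], ?_, ?_, fun i hi => hc i hi, rfl⟩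
    · rw [htdef]; field_simp
    · intro i _
      simp only [htdef]
      have : (i : ℝ) < ((i : ℕ) + 1 : ℕ) := by exact_mod_cast Nat.lt_succ_self i
      gcongr
  · rintro r s ⟨n, t, c, hn, ht0, htn, htlt, htm, hr⟩ ⟨m, u, d, hm, hu0, hun, hult, hum, hs⟩
    rw [hr, hs]
    exact LI_aux ω γ (n + m) n m le_rfl t u c d 0 1 hγ hn ht0 htn htlt htm hm hu0 hun hult hum
end

section
/- Let ω be a continuous closed 1-form on a topological space X, and let γ_0, γ_1 : [0,1] → X be continuous paths with γ_0(0) = γ_1(0) and γ_0(1) = γ_1(1). If γ_0 and γ_1 are homotopic relative to their endpoints, then ∫_{γ_0} ω = ∫_{γ_1} ω. -/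
open Set

section HomotopyAux

open Set Filter Topology

namespace ClosedOneForm

variable {X : Type} [TopologicalSpace X]

private lemma aux_mono {n : ℕ} {t : ℕ → ℝ} (ht : ∀ i < n, t i < t (i + 1)) :
    ∀ i j, i ≤ j → j ≤ n → t i ≤ t j := by
  intro i j hij hjn
  induction j with
  | zero => simp [Nat.le_zero.mp hij]
  | succ k ih =>
    rcases Nat.lt_or_ge i (k + 1) with h | h
    · exact le_trans (ih (Nat.lt_succ_iff.mp h) (le_trans (Nat.le_succ k) hjn))
        (le_of_lt (ht k (Nat.lt_of_succ_le hjn)))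
    · have : i = k + 1 := le_antisymm hij h
      simp [this]

private lemma diff_const (ω : ClosedOneForm X) {γ : ℝ → X} {α β : ℝ} (hαβ : α ≤ β)
    (hγ : ContinuousOn γ (Set.Icc α β)) {i j : ω.ι}
    (hmaps : Set.MapsTo γ (Set.Icc α β) (ω.U i ∩ ω.U j)) :
    ω.f i (γ β) - ω.f j (γ β) = ω.f i (γ α) - ω.f j (γ α) := by
  haveI : PreconnectedSpace ↥(Set.Icc α β) := Subtype.preconnectedSpace isPreconnected_Icc
  have hres : Continuous (fun x : ↥(Set.Icc α β) =>
      (⟨γ x.1, hmaps x.2⟩ : ↥(ω.U i ∩ ω.U j))) :=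
    Continuous.subtype_mk (continuousOn_iff_continuous_restrict.mp hγ) _
  have hlc := (ω.locConst i j).comp_continuous hres
  exact hlc.apply_eq_of_preconnectedSpace ⟨β, right_mem_Icc.2 hαβ⟩ ⟨α, left_mem_Icc.2 hαβ⟩

private lemma sum_clamp (ω : ClosedOneForm X) {γ : ℝ → X} {n : ℕ} {t : ℕ → ℝ} {c : ℕ → ω.ι}
    (hγ : ContinuousOn γ (Set.Icc 0 1))
    (ht0 : t 0 = 0) (htn : t n = 1) (ht : ∀ i < n, t i < t (i + 1))
    (hmaps : ∀ i < n, Set.MapsTo γ (Set.Icc (t i) (t (i + 1))) (ω.U (c i)))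
    {α β : ℝ} (hα : 0 ≤ α) (hβ : β ≤ 1) (hαβ : α ≤ β) {j : ω.ι}
    (hj : Set.MapsTo γ (Set.Icc α β) (ω.U j)) :
    ∑ i ∈ Finset.range n,
        (ω.f (c i) (γ (max (t i) (min β (t (i + 1))))) -
         ω.f (c i) (γ (max (t i) (min α (t (i + 1)))))) =
      ω.f j (γ β) - ω.f j (γ α) := by
  have mono := aux_mono ht
  have key : ∀ i < n,
      ω.f (c i) (γ (max (t i) (min β (t (i+1))))) -
        ω.f (c i) (γ (max (t i) (min α (t (i+1)))))
        = ω.f j (γ (max α (min β (t (i+1))))) - ω.f j (γ (max α (min β (t i)))) := by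
    intro i hi
    have hti : t i ≤ t (i+1) := le_of_lt (ht i hi)
    have ht0i : (0:ℝ) ≤ t i := ht0 ▸ mono 0 i (Nat.zero_le i) (le_of_lt hi)
    have hti1 : t (i+1) ≤ 1 := htn ▸ mono (i+1) n hi le_rfl
    rcases le_or_gt β (t i) with hc1 | hc1
    · rw [max_eq_left (le_trans (min_le_left _ _) (le_trans hαβ hc1)),
        max_eq_left (le_trans (min_le_left _ _) hc1),
        min_eq_left hc1, min_eq_left (le_trans hc1 hti), max_eq_right hαβ,
        sub_self, sub_self]
    rcases le_or_gt (t (i+1)) α with hc2 | hc2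
    · rw [min_eq_right hc2, min_eq_right (le_trans hc2 hαβ), max_eq_right hti,
        min_eq_right (le_trans hti (le_trans hc2 hαβ)),
        max_eq_left hc2, max_eq_left (le_trans hti hc2),
        sub_self, sub_self]
    · -- overlapping case
      set A := max (t i) α with hA
      set B := min β (t (i+1)) with hB
      have hAB : A ≤ B := max_le (le_min hc1.le hti) (le_min hαβ hc2.le)
      have hA0 : 0 ≤ A := le_trans ht0i (le_max_left _ _)
      have hB1 : B ≤ 1 := le_trans (min_le_left _ _) hβ
      have hmapsAB : Set.MapsTo γ (Set.Icc A B) (ω.U (c i) ∩ ω.U j) := by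
        intro x hx
        refine ⟨hmaps i hi ⟨le_trans (le_max_left _ _) hx.1,
            le_trans hx.2 (min_le_right _ _)⟩,
          hj ⟨le_trans (le_max_right _ _) hx.1, le_trans hx.2 (min_le_left _ _)⟩⟩
      have hdiff := ω.diff_const hAB (hγ.mono (Set.Icc_subset_Icc hA0 hB1)) hmapsAB
      have e1 : max (t i) (min α (t (i+1))) = A := by rw [hA, min_eq_left hc2.le]
      have e2 : max (t i) (min β (t (i+1))) = B := by
        rw [hB]; exact max_eq_right (le_min hc1.le hti)
      have e3 : max α (min β (t (i+1))) = B := by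
        rw [hB]; exact max_eq_right (le_min hαβ hc2.le)
      have e4 : max α (min β (t i)) = A := by
        rw [hA, min_eq_right hc1.le, max_comm]
      rw [e1, e2, e3, e4]
      linarith
  rw [Finset.sum_congr rfl (fun i hi => key i (Finset.mem_range.mp hi)),
    Finset.sum_range_sub (fun k => ω.f j (γ (max α (min β (t k))))), ht0, htn,
    min_eq_left hβ, max_eq_right hαβ, min_eq_right (le_trans hα hαβ), max_eq_left hα]

private lemma isIntegralOn_unique (ω : ClosedOneForm X) {γ : ℝ → X}
    (hγ : ContinuousOn γ (Set.Icc 0 1)) {r r' : ℝ}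
    (h1 : ω.IsIntegralOn γ 0 1 r) (h2 : ω.IsIntegralOn γ 0 1 r') : r = r' := by
  obtain ⟨n, t, c, hn, ht0, htn, ht, hmaps, hr⟩ := h1
  obtain ⟨m, s, d, hm, hs0, hsm, hs, hmaps', hr'⟩ := h2
  have monot := aux_mono ht
  have monos := aux_mono hs
  have hs01 : ∀ k ≤ m, s k ∈ Set.Icc (0:ℝ) 1 := fun k hk =>
    ⟨hs0 ▸ monos 0 k (Nat.zero_le k) hk, hsm ▸ monos k m hk le_rfl⟩
  have step : ∀ jj < m,
      ω.f (d jj) (γ (s (jj+1))) - ω.f (d jj) (γ (s jj)) =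
      ∑ i ∈ Finset.range n, (ω.f (c i) (γ (max (t i) (min (s (jj+1)) (t (i+1))))) -
        ω.f (c i) (γ (max (t i) (min (s jj) (t (i+1)))))) := fun jj hjj =>
    (ω.sum_clamp hγ ht0 htn ht hmaps (hs01 jj hjj.le).1 (hs01 (jj+1) hjj).2
      (le_of_lt (hs jj hjj)) (hmaps' jj hjj)).symm
  subst hr hr'
  rw [Finset.sum_congr rfl (fun jj hjj => step jj (Finset.mem_range.mp hjj)),
    Finset.sum_comm]
  refine (Finset.sum_congr rfl fun i hi => ?_).symm
  have hi' := Finset.mem_range.mp hi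
  rw [Finset.sum_range_sub (fun k => ω.f (c i) (γ (max (t i) (min (s k) (t (i+1)))))),
    hs0, hsm, min_eq_right (htn ▸ monot (i+1) n hi' le_rfl),
    max_eq_right (le_of_lt (ht i hi')),
    min_eq_left (ht0 ▸ monot 0 (i+1) (Nat.zero_le _) hi'),
    max_eq_left (ht0 ▸ monot 0 i (Nat.zero_le _) hi'.le)]

private lemma intOn_eq' (ω : ClosedOneForm X) {γ : ℝ → X}
    (hγ : ContinuousOn γ (Set.Icc 0 1)) {r : ℝ} (hr : ω.IsIntegralOn γ 0 1 r) :
    ω.intOn γ 0 1 = r := by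
  have hex : ∃ r, ω.IsIntegralOn γ 0 1 r := ⟨r, hr⟩
  rw [intOn, dif_pos hex]
  exact ω.isIntegralOn_unique hγ hex.choose_spec hr

private lemma isIntegralOn_congr (ω : ClosedOneForm X) {γ γ' : ℝ → X}
    (h : ∀ x ∈ Set.Icc (0:ℝ) 1, γ x = γ' x) {r : ℝ}
    (hr : ω.IsIntegralOn γ 0 1 r) : ω.IsIntegralOn γ' 0 1 r := by
  obtain ⟨n, t, c, hn, ht0, htn, ht, hmaps, hsum⟩ := hr
  have mono := aux_mono ht
  have hti : ∀ i ≤ n, t i ∈ Set.Icc (0:ℝ) 1 := fun i hi =>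
    ⟨ht0 ▸ mono 0 i (Nat.zero_le i) hi, htn ▸ mono i n hi le_rfl⟩
  refine ⟨n, t, c, hn, ht0, htn, ht, ?_, ?_⟩
  · intro i hi x hx
    have hx01 : x ∈ Set.Icc (0:ℝ) 1 :=
      ⟨le_trans (hti i hi.le).1 hx.1, le_trans hx.2 (hti (i+1) hi).2⟩
    rw [← h x hx01]
    exact hmaps i hi hx
  · rw [hsum]
    refine Finset.sum_congr rfl fun i hinr => ?_
    have hi := Finset.mem_range.mp hinr
    rw [h _ (hti i hi.le), h _ (hti (i+1) hi)]

private lemma abel_sum (N : ℕ) (hN : 0 < N) (F : ℕ → ℕ → ℝ) :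
    ∑ i ∈ Finset.range N, (F i (i+1) - F i i)
      = F (N-1) N - F 0 0 + ∑ i ∈ Finset.Ico 1 N, (F (i-1) i - F i i) := by
  induction N with
  | zero => exact absurd hN (lt_irrefl 0)
  | succ k ih =>
    rcases Nat.eq_zero_or_pos k with rfl | hk
    · simp
    · rw [Finset.sum_range_succ, ih hk, Finset.sum_Ico_succ_top (by omega : 1 ≤ k)]
      simp only [Nat.add_sub_cancel]
      ring

private lemma exists_open_diff (ω : ClosedOneForm X) (i j : ω.ι) {y₀ : X}
    (h₁ : y₀ ∈ ω.U i) (h₂ : y₀ ∈ ω.U j) :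
    ∃ T : Set X, IsOpen T ∧ y₀ ∈ T ∧
      ∀ y ∈ T, ω.f i y - ω.f j y = ω.f i y₀ - ω.f j y₀ := by
  obtain ⟨V, hVopen, hV₀, hVeq⟩ := (ω.locConst i j).exists_open ⟨y₀, h₁, h₂⟩
  rw [isOpen_induced_iff] at hVopen
  obtain ⟨O, hO, hOeq⟩ := hVopen
  refine ⟨O ∩ (ω.U i ∩ ω.U j), hO.inter ((ω.isOpen i).inter (ω.isOpen j)), ⟨?_, h₁, h₂⟩, ?_⟩
  · have : (⟨y₀, h₁, h₂⟩ : ↥(ω.U i ∩ ω.U j)) ∈ Subtype.val ⁻¹' O := by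
      rw [hOeq]; exact hV₀
    exact this
  · rintro y ⟨hyO, hy⟩
    have : (⟨y, hy⟩ : ↥(ω.U i ∩ ω.U j)) ∈ V := by
      rw [← hOeq]; exact hyO
    exact hVeq ⟨y, hy⟩ this

end ClosedOneForm

end HomotopyAux


/-- The line integral only depends on the homotopy class of the path
relative to its endpoints. -/
theorem intOn_eq_of_homotopic_rel_endpoints
    {X : Type} [TopologicalSpace X] (ω : ClosedOneForm X)
    (γ₀ γ₁ : ℝ → X)
    (hγ₀ : ContinuousOn γ₀ (Set.Icc 0 1)) (hγ₁ : ContinuousOn γ₁ (Set.Icc 0 1))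
    (h0 : γ₀ 0 = γ₁ 0) (h1 : γ₀ 1 = γ₁ 1)
    (H : ℝ → ℝ → X)
    (hH : ContinuousOn (fun p : ℝ × ℝ => H p.1 p.2)
      (Set.Icc (0 : ℝ) 1 ×ˢ Set.Icc (0 : ℝ) 1))
    (hH0 : ∀ t ∈ Set.Icc (0 : ℝ) 1, H 0 t = γ₀ t)
    (hH1 : ∀ t ∈ Set.Icc (0 : ℝ) 1, H 1 t = γ₁ t)
    (hHleft : ∀ s ∈ Set.Icc (0 : ℝ) 1, H s 0 = γ₀ 0)
    (hHright : ∀ s ∈ Set.Icc (0 : ℝ) 1, H s 1 = γ₀ 1) :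
    ω.intOn γ₀ 0 1 = ω.intOn γ₁ 0 1 := by
  classical
  have hKcomp : IsCompact (Set.Icc (0:ℝ) 1 ×ˢ Set.Icc (0:ℝ) 1) :=
    isCompact_Icc.prod isCompact_Icc
  haveI : CompactSpace ↥(Set.Icc (0:ℝ) 1 ×ˢ Set.Icc (0:ℝ) 1) :=
    isCompact_iff_compactSpace.mp hKcomp
  set G : ↥(Set.Icc (0:ℝ) 1 ×ˢ Set.Icc (0:ℝ) 1) → X :=
    (Set.Icc (0:ℝ) 1 ×ˢ Set.Icc (0:ℝ) 1).restrict (fun p : ℝ × ℝ => H p.1 p.2) with hGdef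
  have hG : Continuous G := continuousOn_iff_continuous_restrict.mp hH
  obtain ⟨δ, hδpos, hball⟩ := lebesgue_number_lemma_of_metric
    (isCompact_univ (X := ↥(Set.Icc (0:ℝ) 1 ×ˢ Set.Icc (0:ℝ) 1)))
    (fun i => (ω.isOpen i).preimage hG)
    (fun x _ => Set.mem_iUnion.2 (ω.covers (G x)))
  -- continuity of each time-slice
  have hHs : ∀ s : ℝ, s ∈ Set.Icc (0:ℝ) 1 → ContinuousOn (fun u => H s u) (Set.Icc 0 1) := by
    intro s hs
    exact hH.comp ((continuous_const.prodMk continuous_id).continuousOn)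
      (fun u hu => ⟨hs, hu⟩)
  -- the key local claim
  have key : ∀ s₀ : ↥(Set.Icc (0:ℝ) 1), ∃ σ₀ : ℝ,
      ω.IsIntegralOn (fun u => H s₀.1 u) 0 1 σ₀ ∧
      ∀ᶠ s' in nhds s₀, ω.IsIntegralOn (fun u => H s'.1 u) 0 1 σ₀ := by
    intro s₀
    obtain ⟨N₀, hN₀⟩ := exists_nat_one_div_lt hδpos
    set N := N₀ + 1 with hNdef
    have hNpos : 0 < N := Nat.succ_pos _
    have hNR : (0:ℝ) < (N:ℝ) := by positivity
    have hstep : (1:ℝ)/(N:ℝ) < δ := by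
      rw [hNdef]; push_cast; exact hN₀
    have hifrac : ∀ i : ℕ, i ≤ N → ((i:ℝ)/(N:ℝ)) ∈ Set.Icc (0:ℝ) 1 := by
      intro i hi
      refine ⟨by positivity, ?_⟩
      rw [div_le_one hNR]
      exact_mod_cast hi
    have hmemK : ∀ i : ℕ, i < N →
        ((s₀.1, (i:ℝ)/(N:ℝ)) : ℝ × ℝ) ∈ Set.Icc (0:ℝ) 1 ×ˢ Set.Icc (0:ℝ) 1 :=
      fun i hi => ⟨s₀.2, hifrac i hi.le⟩
    have hcol : ∀ i : ℕ, ∃ j : ω.ι, i < N → ∀ q : ℝ × ℝ,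
        ∀ hq : q ∈ Set.Icc (0:ℝ) 1 ×ˢ Set.Icc (0:ℝ) 1,
        dist q (s₀.1, (i:ℝ)/(N:ℝ)) < δ → H q.1 q.2 ∈ ω.U j := by
      intro i
      by_cases hi : i < N
      · obtain ⟨j, hj⟩ := hball ⟨(s₀.1, (i:ℝ)/(N:ℝ)), hmemK i hi⟩ (Set.mem_univ _)
        refine ⟨j, fun _ q hq hdist => ?_⟩
        have hmemball : (⟨q, hq⟩ : ↥(Set.Icc (0:ℝ) 1 ×ˢ Set.Icc (0:ℝ) 1)) ∈
            Metric.ball (⟨(s₀.1, (i:ℝ)/(N:ℝ)), hmemK i hi⟩ :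
              ↥(Set.Icc (0:ℝ) 1 ×ˢ Set.Icc (0:ℝ) 1)) δ := by
          rw [Metric.mem_ball, Subtype.dist_eq]
          exact hdist
        exact hj hmemball
      · exact ⟨(ω.covers (γ₀ 0)).choose, fun h => absurd h hi⟩
    choose c' hc' using hcol
    set σ : ℝ → ℝ := fun s => ∑ i ∈ Finset.range N,
      (ω.f (c' i) (H s ((((i+1):ℕ):ℝ)/(N:ℝ))) - ω.f (c' i) (H s ((i:ℝ)/(N:ℝ)))) with hσdef
    -- any nearby slice has integral σ s'
    have hwit : ∀ s' : ℝ, s' ∈ Set.Icc (0:ℝ) 1 → dist s' s₀.1 < δ →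
        ω.IsIntegralOn (fun u => H s' u) 0 1 (σ s') := by
      intro s' hs' hdist
      refine ⟨N, fun k => (k:ℝ)/(N:ℝ), c', hNpos, by simp, div_self hNR.ne', ?_, ?_, ?_⟩
      · intro i _
        rw [div_lt_div_iff_of_pos_right hNR]
        push_cast
        linarith
      · intro i hi x hx
        have hx2 : x ≤ ((i+1:ℕ):ℝ)/(N:ℝ) := hx.2
        have hx1 : (i:ℝ)/(N:ℝ) ≤ x := hx.1
        have hxIcc : x ∈ Set.Icc (0:ℝ) 1 :=
          ⟨le_trans (hifrac i hi.le).1 hx1, le_trans hx2 (hifrac (i+1) hi).2⟩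
        refine hc' i hi (s', x) ⟨hs', hxIcc⟩ ?_
        rw [Prod.dist_eq]
        refine max_lt hdist ?_
        have hdx : ((i+1:ℕ):ℝ)/(N:ℝ) - (i:ℝ)/(N:ℝ) = 1/(N:ℝ) := by
          push_cast; ring
        rw [Real.dist_eq, abs_of_nonneg (by linarith)]
        linarith
      · rw [hσdef]
    -- σ is eventually constant near s₀
    have hmid : ∀ i ∈ Finset.Ico 1 N, ∀ᶠ s' : ↥(Set.Icc (0:ℝ) 1) in nhds s₀,
        ω.f (c' (i-1)) (H s'.1 ((i:ℝ)/(N:ℝ))) - ω.f (c' i) (H s'.1 ((i:ℝ)/(N:ℝ))) =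
        ω.f (c' (i-1)) (H s₀.1 ((i:ℝ)/(N:ℝ))) - ω.f (c' i) (H s₀.1 ((i:ℝ)/(N:ℝ))) := by
      intro i hiIco
      obtain ⟨hi1, hiN⟩ := Finset.mem_Ico.mp hiIco
      have hy₀i : H s₀.1 ((i:ℝ)/(N:ℝ)) ∈ ω.U (c' i) := by
        refine hc' i hiN (s₀.1, (i:ℝ)/(N:ℝ)) (hmemK i hiN) ?_
        rw [dist_self]; exact hδpos
      have hy₀i' : H s₀.1 ((i:ℝ)/(N:ℝ)) ∈ ω.U (c' (i-1)) := by
        refine hc' (i-1) (by omega) (s₀.1, (i:ℝ)/(N:ℝ)) (hmemK i hiN) ?_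
        rw [Prod.dist_eq]
        refine max_lt (by rw [dist_self]; exact hδpos) ?_
        dsimp only
        have hcast : (((i-1:ℕ)):ℝ) = (i:ℝ) - 1 := by
          push_cast [Nat.cast_sub hi1]; ring
        have hdx : (i:ℝ)/(N:ℝ) - ((i-1:ℕ):ℝ)/(N:ℝ) = 1/(N:ℝ) := by
          rw [hcast]; ring
        rw [Real.dist_eq, abs_of_nonneg (by rw [hdx]; positivity)]
        linarith
      obtain ⟨T, hTopen, hy₀T, hTprop⟩ := ω.exists_open_diff (c' (i-1)) (c' i) hy₀i' hy₀i
      have hψ : Continuous (fun s : ↥(Set.Icc (0:ℝ) 1) =>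
          H s.1 ((i:ℝ)/(N:ℝ))) := by
        have : Continuous (fun s : ↥(Set.Icc (0:ℝ) 1) =>
            (⟨(s.1, (i:ℝ)/(N:ℝ)), ⟨s.2, hifrac i hiN.le⟩⟩ :
              ↥(Set.Icc (0:ℝ) 1 ×ˢ Set.Icc (0:ℝ) 1))) :=
          Continuous.subtype_mk (continuous_subtype_val.prodMk continuous_const) _
        exact hG.comp this
      have hevT : ∀ᶠ s' : ↥(Set.Icc (0:ℝ) 1) in nhds s₀,
          H s'.1 ((i:ℝ)/(N:ℝ)) ∈ T := hψ.tendsto s₀ (hTopen.mem_nhds hy₀T)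
      filter_upwards [hevT] with s' hTmem
      rw [hTprop _ hTmem]
    have hσev : ∀ᶠ s' : ↥(Set.Icc (0:ℝ) 1) in nhds s₀, σ s'.1 = σ s₀.1 := by
      have hall : ∀ᶠ s' : ↥(Set.Icc (0:ℝ) 1) in nhds s₀,
          ∀ i ∈ (↑(Finset.Ico 1 N) : Set ℕ),
          ω.f (c' (i-1)) (H s'.1 ((i:ℝ)/(N:ℝ))) - ω.f (c' i) (H s'.1 ((i:ℝ)/(N:ℝ))) =
          ω.f (c' (i-1)) (H s₀.1 ((i:ℝ)/(N:ℝ))) - ω.f (c' i) (H s₀.1 ((i:ℝ)/(N:ℝ))) := by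
        rw [Filter.eventually_all_finite (Finset.Ico 1 N).finite_toSet]
        intro i hi
        exact hmid i (Finset.mem_coe.mp hi)
      filter_upwards [hall] with s' hmideq
      have habel : ∀ s : ℝ, σ s =
          ω.f (c' (N-1)) (H s ((N:ℝ)/(N:ℝ))) - ω.f (c' 0) (H s (((0:ℕ):ℝ)/(N:ℝ))) +
          ∑ i ∈ Finset.Ico 1 N,
            (ω.f (c' (i-1)) (H s ((i:ℝ)/(N:ℝ))) - ω.f (c' i) (H s ((i:ℝ)/(N:ℝ)))) := by
        intro s
        rw [hσdef]
        exact ClosedOneForm.abel_sum N hNpos (fun i k => ω.f (c' i) (H s ((k:ℝ)/(N:ℝ))))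
      have e1 : ((N:ℕ):ℝ)/(N:ℝ) = 1 := div_self hNR.ne'
      have e0 : (((0:ℕ)):ℝ)/(N:ℝ) = 0 := by simp
      rw [habel s'.1, habel s₀.1, e1, e0, hHright s'.1 s'.2, hHright s₀.1 s₀.2,
        hHleft s'.1 s'.2, hHleft s₀.1 s₀.2]
      congr 1
      exact Finset.sum_congr rfl fun i hi => hmideq i (Finset.mem_coe.mpr hi)
    refine ⟨σ s₀.1, hwit s₀.1 s₀.2 (by rw [dist_self]; exact hδpos), ?_⟩
    have hdistev : ∀ᶠ s' : ↥(Set.Icc (0:ℝ) 1) in nhds s₀, dist s'.1 s₀.1 < δ := by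
      filter_upwards [Metric.ball_mem_nhds s₀ hδpos] with s' hs'
      rw [← Subtype.dist_eq]
      exact hs'
    filter_upwards [hdistev, hσev] with s' h1 h2
    have := hwit s'.1 s'.2 h1
    rwa [h2] at this
  -- the integral as a function of the homotopy parameter
  set φ : ↥(Set.Icc (0:ℝ) 1) → ℝ := fun s => ω.intOn (fun u => H s.1 u) 0 1 with hφdef
  have hlc : IsLocallyConstant φ := by
    rw [IsLocallyConstant.iff_eventually_eq]
    intro s₀
    obtain ⟨σ₀, h₀, hev⟩ := key s₀
    have hφ0 : φ s₀ = σ₀ := ω.intOn_eq' (hHs s₀.1 s₀.2) h₀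
    filter_upwards [hev] with s' h'
    rw [hφ0, hφdef]
    exact ω.intOn_eq' (hHs s'.1 s'.2) h'
  haveI : PreconnectedSpace ↥(Set.Icc (0:ℝ) 1) :=
    Subtype.preconnectedSpace isPreconnected_Icc
  have hmem0 : (0:ℝ) ∈ Set.Icc (0:ℝ) 1 := Set.left_mem_Icc.mpr zero_le_one
  have hmem1 : (1:ℝ) ∈ Set.Icc (0:ℝ) 1 := Set.right_mem_Icc.mpr zero_le_one
  have h01 : φ ⟨0, hmem0⟩ = φ ⟨1, hmem1⟩ := hlc.apply_eq_of_preconnectedSpace _ _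
  obtain ⟨σa, ha, -⟩ := key ⟨0, hmem0⟩
  obtain ⟨σb, hb, -⟩ := key ⟨1, hmem1⟩
  have ha' : ω.IsIntegralOn γ₀ 0 1 σa :=
    ω.isIntegralOn_congr (fun x hx => hH0 x hx) ha
  have hb' : ω.IsIntegralOn γ₁ 0 1 σb :=
    ω.isIntegralOn_congr (fun x hx => hH1 x hx) hb
  calc ω.intOn γ₀ 0 1 = σa := ω.intOn_eq' hγ₀ ha'
    _ = φ ⟨0, hmem0⟩ := (ω.intOn_eq' (hHs 0 hmem0) ha).symm
    _ = φ ⟨1, hmem1⟩ := h01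
    _ = σb := ω.intOn_eq' (hHs 1 hmem1) hb
    _ = ω.intOn γ₁ 0 1 := (ω.intOn_eq' hγ₁ hb').symm
end

section
/- Let ω be a continuous closed 1-form on a topological space X and x_0 ∈ X. Then the assignment sending a loop γ : [0,1] → X based at x_0 to the line integral ∫_γ ω descends to a well-defined group homomorphism π_1(X, x_0) → (ℝ, +), called the homomorphism of periods of ω. -/
open Set

/-- The line integral of a continuous closed 1-form along a `Path`. -/
noncomputable def pathIntegral {X : Type} [TopologicalSpace X] (ω : ClosedOneForm X)
    {x y : X} (γ : Path x y) : ℝ :=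
  ω.intOn (fun t => γ.extend t) 0 1


section PeriodsAux

open Set

namespace ClosedOneForm

variable {X : Type} [TopologicalSpace X] (ω : ClosedOneForm X)

private lemma part_le {n : ℕ} {t : ℕ → ℝ} (ht : ∀ i < n, t i < t (i + 1)) :
    ∀ j k, j ≤ k → k ≤ n → t j ≤ t k := by
  intro j k
  induction k with
  | zero => intro hjk _; exact Nat.le_zero.mp hjk ▸ le_rfl
  | succ k ih =>
    intro hjk hkn
    rcases Nat.lt_or_ge j (k + 1) with h | h
    · exact le_trans (ih (Nat.lt_succ_iff.mp h) (by omega)) (ht k (by omega)).le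
    · have hj : j = k + 1 := by omega
      exact hj ▸ le_rfl

private lemma locConst_eq {i j : ω.ι} {s : Set X} (hs : IsPreconnected s)
    (hsub : s ⊆ ω.U i ∩ ω.U j) {x y : X} (hx : x ∈ s) (hy : y ∈ s) :
    ω.f i x - ω.f j x = ω.f i y - ω.f j y := by
  haveI : PreconnectedSpace s := Subtype.preconnectedSpace hs
  have he : Continuous (fun p : s => (⟨p.1, hsub p.2⟩ : ↥(ω.U i ∩ ω.U j))) :=
    Continuous.subtype_mk continuous_subtype_val _
  exact ((ω.locConst i j).comp_continuous he).apply_eq_of_preconnectedSpace ⟨x, hx⟩ ⟨y, hy⟩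

private lemma unique_chart {γ : ℝ → X} (hγ : Continuous γ) {a b r : ℝ} (i : ω.ι)
    (hmap : MapsTo γ (Icc a b) (ω.U i)) (h : ω.IsIntegralOn γ a b r) :
    r = ω.f i (γ b) - ω.f i (γ a) := by
  obtain ⟨n, t, c, hn, ht0, htn, hlt, hmM, hsum⟩ := h
  have hmem : ∀ k, k ≤ n → t k ∈ Icc a b := fun k hk =>
    ⟨ht0 ▸ part_le hlt 0 k (Nat.zero_le _) hk, htn ▸ part_le hlt k n hk le_rfl⟩
  have key : ∀ k ∈ Finset.range n,
      ω.f (c k) (γ (t (k + 1))) - ω.f (c k) (γ (t k))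
        = ω.f i (γ (t (k + 1))) - ω.f i (γ (t k)) := by
    intro k hk
    rw [Finset.mem_range] at hk
    have hIcc : Icc (t k) (t (k + 1)) ⊆ Icc a b :=
      Icc_subset_Icc (hmem k hk.le).1 (hmem (k + 1) hk).2
    have hpre : IsPreconnected (γ '' Icc (t k) (t (k + 1))) :=
      isPreconnected_Icc.image _ hγ.continuousOn
    have hsub2 : γ '' Icc (t k) (t (k + 1)) ⊆ ω.U (c k) ∩ ω.U i := by
      rintro _ ⟨u, hu, rfl⟩
      exact ⟨hmM k hk hu, hmap (hIcc hu)⟩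
    have hle := (hlt k hk).le
    have h1 := locConst_eq ω hpre hsub2
      (mem_image_of_mem γ (right_mem_Icc.mpr hle))
      (mem_image_of_mem γ (left_mem_Icc.mpr hle))
    linarith
  rw [hsum, Finset.sum_congr rfl key, Finset.sum_range_sub (fun k => ω.f i (γ (t k))), ht0, htn]

private lemma exists_integral {γ : ℝ → X} (hγ : Continuous γ) {a b : ℝ} (hab : a < b) :
    ∃ r, ω.IsIntegralOn γ a b r := by
  obtain ⟨δ, hδ, hball⟩ := lebesgue_number_lemma_of_metric (isCompact_Icc (a := a) (b := b))
    (fun i => (ω.isOpen i).preimage hγ)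
    (fun x _ => mem_iUnion.mpr ((ω.covers (γ x)).imp fun i hi => hi))
  obtain ⟨n, hn⟩ := exists_nat_gt ((b - a) / δ)
  have hq : 0 < (b - a) / δ := div_pos (by linarith) hδ
  have hn0 : 0 < n := by exact_mod_cast hq.trans hn
  have hn0' : (0 : ℝ) < n := by exact_mod_cast hn0
  have h1 : b - a < (n : ℝ) * δ := (div_lt_iff₀ hδ).mp hn
  have hstep : (b - a) / n < δ := by
    rw [div_lt_iff₀ hn0']
    linarith [mul_comm (n : ℝ) δ]
  set d := (b - a) / n with hd
  have hd0 : 0 < d := div_pos (by linarith) hn0'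
  set t : ℕ → ℝ := fun i => a + i * d with htdef
  have ht0 : t 0 = a := by simp [htdef]
  have htn : t n = b := by
    simp only [htdef, hd]
    field_simp
    ring
  have hgap : ∀ i : ℕ, t (i + 1) - t i = d := by
    intro i; simp only [htdef]; push_cast; ring
  have hlt : ∀ i : ℕ, t i < t (i + 1) := by
    intro i
    have := hgap i
    linarith
  have hmem : ∀ i, i ≤ n → t i ∈ Icc a b := by
    intro i hi
    have hin : (i : ℝ) ≤ n := by exact_mod_cast hi
    have hnd : (n : ℝ) * d = b - a := by rw [hd]; field_simp
    constructor
    · simp only [htdef]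
      nlinarith [hd0, (Nat.cast_nonneg i : (0 : ℝ) ≤ i)]
    · simp only [htdef]
      nlinarith [hd0]
  have hchart : ∀ i : ℕ, ∃ ci : ω.ι, i < n → MapsTo γ (Icc (t i) (t (i + 1))) (ω.U ci) := by
    intro i
    by_cases hi : i < n
    · obtain ⟨ci, hci⟩ := hball (t i) (hmem i hi.le)
      refine ⟨ci, fun _ u hu => hci ?_⟩
      rw [Metric.mem_ball, Real.dist_eq, abs_of_nonneg (by linarith [hu.1])]
      have := hgap i
      have := hu.2
      linarith
    · exact ⟨(ω.covers (γ a)).choose, fun h => absurd h hi⟩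
  choose c hc using hchart
  exact ⟨_, n, t, c, hn0, ht0, htn, fun i _ => hlt i, fun i hi => hc i hi, rfl⟩

private lemma integral_congr {γ γ' : ℝ → X} {a b r : ℝ}
    (h : ω.IsIntegralOn γ a b r) (he : ∀ s ∈ Icc a b, γ s = γ' s) :
    ω.IsIntegralOn γ' a b r := by
  obtain ⟨n, t, c, hn, ht0, htn, hlt, hmM, hsum⟩ := h
  have hmem : ∀ k, k ≤ n → t k ∈ Icc a b := fun k hk =>
    ⟨ht0 ▸ part_le hlt 0 k (Nat.zero_le _) hk, htn ▸ part_le hlt k n hk le_rfl⟩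
  refine ⟨n, t, c, hn, ht0, htn, hlt, ?_, ?_⟩
  · intro i hi u hu
    have hIcc : Icc (t i) (t (i + 1)) ⊆ Icc a b :=
      Icc_subset_Icc (hmem i hi.le).1 (hmem (i + 1) hi).2
    rw [← he u (hIcc hu)]
    exact hmM i hi hu
  · rw [hsum]
    refine Finset.sum_congr rfl fun k hk => ?_
    rw [Finset.mem_range] at hk
    rw [he (t k) (hmem k hk.le), he (t (k + 1)) (hmem (k + 1) hk)]

private lemma integral_compAffine {γ : ℝ → X} {a b r p q : ℝ} (hp : 0 < p)
    (h : ω.IsIntegralOn γ (p * a + q) (p * b + q) r) :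
    ω.IsIntegralOn (fun s => γ (p * s + q)) a b r := by
  obtain ⟨n, t, c, hn, ht0, htn, hlt, hmM, hsum⟩ := h
  have key : ∀ u : ℝ, p * ((u - q) / p) + q = u := by
    intro u; field_simp; ring
  refine ⟨n, fun i => (t i - q) / p, c, hn, ?_, ?_, ?_, ?_, ?_⟩
  · show (t 0 - q) / p = a
    rw [ht0, add_sub_cancel_right]
    exact mul_div_cancel_left₀ a hp.ne'
  · show (t n - q) / p = b
    rw [htn, add_sub_cancel_right]
    exact mul_div_cancel_left₀ b hp.ne'
  · intro i hi
    exact (div_lt_div_iff_of_pos_right hp).mpr (sub_lt_sub_right (hlt i hi) q)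
  · intro i hi u hu
    apply hmM i hi
    have h1 := mul_le_mul_of_nonneg_left hu.1 hp.le
    have h2 := mul_le_mul_of_nonneg_left hu.2 hp.le
    constructor
    · linarith [key (t i)]
    · linarith [key (t (i + 1))]
  · rw [hsum]
    refine Finset.sum_congr rfl fun k _ => ?_
    simp only [key]

private lemma integral_split {γ : ℝ → X} {a b m r : ℝ} (h : ω.IsIntegralOn γ a b r)
    (ham : a < m) (hmb : m < b) :
    ∃ r₁ r₂, r = r₁ + r₂ ∧ ω.IsIntegralOn γ a m r₁ ∧ ω.IsIntegralOn γ m b r₂ := by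
  classical
  obtain ⟨n, t, c, hn, ht0, htn, hlt, hmM, hsum⟩ := h
  set Δ : ℕ → ℝ := fun i => ω.f (c i) (γ (t (i + 1))) - ω.f (c i) (γ (t i)) with hΔ
  set j := Nat.findGreatest (fun k => t k ≤ m) (n - 1) with hj
  have hP0 : t 0 ≤ m := by rw [ht0]; exact ham.le
  have hjle : j ≤ n - 1 := Nat.findGreatest_le _
  have hjn : j < n := lt_of_le_of_lt hjle (Nat.pred_lt hn.ne')
  have htj : t j ≤ m := by
    rw [hj]
    exact Nat.findGreatest_spec (P := fun k => t k ≤ m) (Nat.zero_le _) hP0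
  have htj1 : m < t (j + 1) := by
    rcases Nat.lt_or_ge (j + 1) n with h1 | h1
    · have hgr := Nat.findGreatest_is_greatest (P := fun k => t k ≤ m)
        (n := n - 1) (k := j + 1) (by omega) (by omega)
      exact lt_of_not_ge hgr
    · have hjn' : j + 1 = n := by omega
      rw [hjn', htn]; exact hmb
  have hrsplit : r = ∑ i ∈ Finset.range j, Δ i + ∑ i ∈ Finset.range (n - j), Δ (j + i) := by
    rw [hsum]
    have h2 : n = j + (n - j) := by omega
    calc (Finset.range n).sum Δ = (Finset.range (j + (n - j))).sum Δ := by rw [← h2]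
      _ = ∑ i ∈ Finset.range j, Δ i + ∑ i ∈ Finset.range (n - j), Δ (j + i) :=
        Finset.sum_range_add Δ j (n - j)
  rcases lt_or_eq_of_le htj with hcase | hcase
  · -- t j < m : split interval j at m
    refine ⟨∑ i ∈ Finset.range j, Δ i + (ω.f (c j) (γ m) - ω.f (c j) (γ (t j))),
      ∑ i ∈ Finset.range (n - j),
        (ω.f (c (j + i)) (γ (if i + 1 = 0 then m else t (j + (i + 1))))
          - ω.f (c (j + i)) (γ (if i = 0 then m else t (j + i)))), ?_, ?_, ?_⟩
    · -- the sum identity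
      have hnj : n - j = (n - j - 1) + 1 := by omega
      have hrhs : ∑ i ∈ Finset.range (n - j),
          (ω.f (c (j + i)) (γ (if i + 1 = 0 then m else t (j + (i + 1))))
            - ω.f (c (j + i)) (γ (if i = 0 then m else t (j + i))))
          = ∑ i ∈ Finset.range (n - j - 1), Δ (j + (i + 1))
            + (ω.f (c j) (γ (t (j + 1))) - ω.f (c j) (γ m)) := by
        conv_lhs => rw [hnj]
        rw [Finset.sum_range_succ']
        simp [hΔ, Nat.add_assoc]
      rw [hrhs]
      have hsum2 : ∑ i ∈ Finset.range (n - j), Δ (j + i)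
          = ∑ i ∈ Finset.range (n - j - 1), Δ (j + (i + 1)) + Δ (j + 0) := by
        conv_lhs => rw [hnj]
        exact Finset.sum_range_succ' _ _
      rw [hrsplit, hsum2, hΔ]
      simp only [Nat.add_zero]
      ring
    · -- left part
      refine ⟨j + 1, fun i => if i ≤ j then t i else m, c, Nat.succ_pos _, ?_, ?_, ?_, ?_, ?_⟩
      · simp [ht0]
      · simp
      · intro i hi
        simp only
        rcases Nat.lt_or_ge i j with h1 | h1
        · rw [if_pos h1.le, if_pos (by omega : i + 1 ≤ j)]
          exact hlt i (by omega)
        · have hij : i = j := by omega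
          rw [if_pos (by omega : i ≤ j), if_neg (by omega : ¬ i + 1 ≤ j), hij]
          exact hcase
      · intro i hi u hu
        simp only at hu
        rcases Nat.lt_or_ge i j with h1 | h1
        · rw [if_pos h1.le, if_pos (by omega : i + 1 ≤ j)] at hu
          exact hmM i (by omega) hu
        · have hij : i = j := by omega
          rw [if_pos (by omega : i ≤ j), if_neg (by omega : ¬ i + 1 ≤ j), hij] at hu
          rw [hij]
          exact hmM j hjn ⟨hu.1, hu.2.trans htj1.le⟩
      · rw [Finset.sum_range_succ]
        simp only [hΔ]
        congr 1
        · refine Finset.sum_congr rfl fun k hk => ?_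
          rw [Finset.mem_range] at hk
          rw [if_pos hk.le, if_pos (by omega : k + 1 ≤ j)]
        · rw [if_pos le_rfl, if_neg (by omega : ¬ j + 1 ≤ j)]
    · -- right part
      refine ⟨n - j, fun i => if i = 0 then m else t (j + i), fun i => c (j + i), by omega,
        by simp, ?_, ?_, ?_, rfl⟩
      · simp only
        rw [if_neg (by omega : ¬ n - j = 0), show j + (n - j) = n by omega, htn]
      · intro i hi
        simp only
        rcases Nat.eq_zero_or_pos i with rfl | h1
        · rw [if_pos rfl, if_neg (by omega : ¬ (0 : ℕ) + 1 = 0),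
            show j + (0 + 1) = j + 1 by omega]
          exact htj1
        · rw [if_neg (by omega : ¬ i = 0), if_neg (by omega : ¬ i + 1 = 0),
            show j + (i + 1) = j + i + 1 by omega]
          exact hlt (j + i) (by omega)
      · intro i hi u hu
        simp only at hu
        rcases Nat.eq_zero_or_pos i with rfl | h1
        · rw [if_pos rfl, if_neg (by omega : ¬ (0 : ℕ) + 1 = 0),
            show j + (0 + 1) = j + 1 by omega] at hu
          exact hmM j hjn ⟨le_trans hcase.le hu.1, hu.2⟩
        · rw [if_neg (by omega : ¬ i = 0), if_neg (by omega : ¬ i + 1 = 0),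
            show j + (i + 1) = j + i + 1 by omega] at hu
          exact hmM (j + i) (by omega) hu
  · -- t j = m : cut exactly at index j
    have hj0 : 0 < j := by
      rcases Nat.eq_zero_or_pos j with h0 | h1
      · exfalso
        rw [h0, ht0] at hcase
        exact absurd hcase ham.ne
      · exact h1
    refine ⟨∑ i ∈ Finset.range j, Δ i, ∑ i ∈ Finset.range (n - j), Δ (j + i), hrsplit, ?_, ?_⟩
    · exact ⟨j, t, c, hj0, ht0, hcase, fun i hi => hlt i (by omega),
        fun i hi => hmM i (by omega), rfl⟩
    · refine ⟨n - j, fun i => t (j + i), fun i => c (j + i), by omega, by simpa using hcase,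
        ?_, ?_, ?_, ?_⟩
      · simp only
        rw [show j + (n - j) = n by omega, htn]
      · intro i hi
        simp only
        rw [show j + (i + 1) = j + i + 1 by omega]
        exact hlt (j + i) (by omega)
      · intro i hi u hu
        simp only at hu
        rw [show j + (i + 1) = j + i + 1 by omega] at hu
        exact hmM (j + i) (by omega) hu
      · refine Finset.sum_congr rfl fun k hk => ?_
        rw [hΔ]
        simp only [show j + (k + 1) = j + k + 1 by omega]

private lemma integral_unique_aux {γ : ℝ → X} (hγ : Continuous γ) :
    ∀ n : ℕ, ∀ {a b r r' : ℝ} (t : ℕ → ℝ) (c : ℕ → ω.ι), 0 < n → t 0 = a → t n = b →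
    (∀ i < n, t i < t (i + 1)) → (∀ i < n, MapsTo γ (Icc (t i) (t (i + 1))) (ω.U (c i))) →
    r = ∑ i ∈ Finset.range n, (ω.f (c i) (γ (t (i + 1))) - ω.f (c i) (γ (t i))) →
    ω.IsIntegralOn γ a b r' → r = r' := by
  intro n
  induction n with
  | zero => intro a b r r' t c h; omega
  | succ n ih =>
    intro a b r r' t c _ ht0 htn hlt hmM hsum h'
    rcases Nat.eq_zero_or_pos n with rfl | hn
    · have hmap : MapsTo γ (Icc a b) (ω.U (c 0)) := by
        rw [← ht0, ← htn]; exact hmM 0 (by omega)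
      have := unique_chart ω hγ (c 0) hmap h'
      rw [hsum, Finset.sum_range_one, ht0, htn, this]
    · set m := t 1 with hm
      have ham : a < m := ht0 ▸ hlt 0 (by omega)
      have hmb : m < b := by
        rw [← htn]
        exact lt_of_le_of_lt (part_le hlt 1 n (by omega) (by omega)) (hlt n (by omega))
      obtain ⟨r₁, r₂, hr, h₁, h₂⟩ := integral_split ω h' ham hmb
      have e₁ : r₁ = ω.f (c 0) (γ m) - ω.f (c 0) (γ a) := by
        refine unique_chart ω hγ (c 0) ?_ h₁
        rw [← ht0]; exact hmM 0 (by omega)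
      have e₂ : r - (ω.f (c 0) (γ (t 1)) - ω.f (c 0) (γ (t 0))) = r₂ := by
        refine ih (fun i => t (i + 1)) (fun i => c (i + 1)) hn rfl htn
          (fun i hi => hlt (i + 1) (by omega)) (fun i hi => hmM (i + 1) (by omega)) ?_ h₂
        rw [hsum, Finset.sum_range_succ']
        ring
      rw [ht0, ← hm] at e₂
      rw [hr, e₁, ← e₂]
      ring

private lemma integral_unique {γ : ℝ → X} (hγ : Continuous γ) {a b r r' : ℝ}
    (h : ω.IsIntegralOn γ a b r) (h' : ω.IsIntegralOn γ a b r') : r = r' := by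
  obtain ⟨n, t, c, hn, ht0, htn, hlt, hmM, hsum⟩ := h
  exact integral_unique_aux ω hγ n t c hn ht0 htn hlt hmM hsum h'

private lemma intOn_eq_of {γ : ℝ → X} (hγ : Continuous γ) {a b r : ℝ}
    (h : ω.IsIntegralOn γ a b r) : ω.intOn γ a b = r := by
  have hex : ∃ r, ω.IsIntegralOn γ a b r := ⟨r, h⟩
  have h1 : ω.intOn γ a b = hex.choose := by
    simp only [ClosedOneForm.intOn, dif_pos hex]
  rw [h1]
  exact integral_unique ω hγ hex.choose_spec h

private lemma row_step {G : ℝ × ℝ → X} (hG : Continuous G) {x₀ y₀ : X}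
    (h0 : ∀ s : ℝ, G (s, 0) = x₀) (h1 : ∀ s : ℝ, G (s, 1) = y₀)
    {s s' : ℝ} (hss : s ≤ s') {m : ℕ} (hm : 0 < m) (c : ℕ → ω.ι)
    (hc : ∀ j < m, MapsTo G
      (Icc s s' ×ˢ Icc ((j : ℝ) / m) (((j + 1 : ℕ) : ℝ) / m)) (ω.U (c j))) :
    ω.intOn (fun u => G (s, u)) 0 1 = ω.intOn (fun u => G (s', u)) 0 1 := by
  have hm' : (0 : ℝ) < m := by exact_mod_cast hm
  set t : ℕ → ℝ := fun j => (j : ℝ) / m with htdef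
  have ht0 : t 0 = 0 := by simp [htdef]
  have htm : t m = 1 := by
    simp only [htdef]
    exact div_self hm'.ne'
  have hlt : ∀ j : ℕ, t j < t (j + 1) := by
    intro j
    have h2 : (j : ℝ) < (j : ℝ) + 1 := by linarith
    have h3 := (div_lt_div_iff_of_pos_right hm').mpr h2
    simp only [htdef]
    push_cast
    exact h3
  have hrow : ∀ v : ℝ, v ∈ Icc s s' →
      ω.intOn (fun u => G (v, u)) 0 1
        = ∑ j ∈ Finset.range m, (ω.f (c j) (G (v, t (j + 1))) - ω.f (c j) (G (v, t j))) := by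
    intro v hv
    have hcont : Continuous fun u => G (v, u) := hG.comp (continuous_const.prodMk continuous_id)
    refine intOn_eq_of ω hcont ⟨m, t, c, hm, ht0, htm, fun j _ => hlt j, ?_, rfl⟩
    intro j hj u hu
    exact hc j hj ⟨hv, hu⟩
  have hVzero : ∀ i : ω.ι, ω.f i (G (s', t 0)) - ω.f i (G (s, t 0)) = 0 := by
    intro i
    rw [ht0, h0 s', h0 s]
    ring
  have hVone : ∀ i : ω.ι, ω.f i (G (s', t m)) - ω.f i (G (s, t m)) = 0 := by
    intro i
    rw [htm, h1 s', h1 s]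
    ring
  set V : ℕ → ω.ι → ℝ := fun j i => ω.f i (G (s', t j)) - ω.f i (G (s, t j)) with hV
  have hVeq : ∀ j : ℕ, j + 1 < m → V (j + 1) (c j) = V (j + 1) (c (j + 1)) := by
    intro j hj
    have hcont : Continuous fun v : ℝ => G (v, t (j + 1)) :=
      hG.comp (continuous_id.prodMk continuous_const)
    have hpre : IsPreconnected ((fun v : ℝ => G (v, t (j + 1))) '' Icc s s') :=
      isPreconnected_Icc.image _ hcont.continuousOn
    have hsub : (fun v : ℝ => G (v, t (j + 1))) '' Icc s s' ⊆ ω.U (c j) ∩ ω.U (c (j + 1)) := by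
      rintro _ ⟨v, hv, rfl⟩
      constructor
      · exact hc j (by omega) ⟨hv, ⟨(hlt j).le, le_rfl⟩⟩
      · exact hc (j + 1) hj ⟨hv, ⟨le_rfl, (hlt (j + 1)).le⟩⟩
    have h2 := locConst_eq ω hpre hsub
      (mem_image_of_mem _ (right_mem_Icc.mpr hss))
      (mem_image_of_mem _ (left_mem_Icc.mpr hss))
    simp only [hV]
    linarith
  rw [hrow s (left_mem_Icc.mpr hss), hrow s' (right_mem_Icc.mpr hss)]
  have hz0 : V 0 (c 0) = 0 := by
    simp only [hV]
    exact hVzero (c 0)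
  have hzm : V m (c m) = 0 := by
    simp only [hV]
    exact hVone (c m)
  have htele : ∑ j ∈ Finset.range m, (V (j + 1) (c j) - V j (c j)) = 0 := by
    have hsplit : ∀ j ∈ Finset.range m, V (j + 1) (c j) - V j (c j)
        = (V (j + 1) (c (j + 1)) - V j (c j)) + (V (j + 1) (c j) - V (j + 1) (c (j + 1))) :=
      fun j _ => by ring
    rw [Finset.sum_congr rfl hsplit, Finset.sum_add_distrib,
      Finset.sum_range_sub (fun j => V j (c j))]
    have hzz : ∀ j ∈ Finset.range m, V (j + 1) (c j) - V (j + 1) (c (j + 1)) = 0 := by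
      intro j hj
      rw [Finset.mem_range] at hj
      rcases Nat.lt_or_ge (j + 1) m with h2 | h2
      · rw [hVeq j h2]
        ring
      · have hjm : j + 1 = m := by omega
        have z1 : V (j + 1) (c j) = 0 := by
          rw [hjm]
          simp only [hV]
          exact hVone (c j)
        have z2 : V (j + 1) (c (j + 1)) = 0 := by
          rw [hjm]
          simp only [hV]
          exact hVone (c m)
        rw [z1, z2]
        ring
    rw [Finset.sum_congr rfl hzz, Finset.sum_const_zero, hz0, hzm]
    ring
  have hdiff : ∑ j ∈ Finset.range m, (ω.f (c j) (G (s', t (j + 1))) - ω.f (c j) (G (s', t j)))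
      - ∑ j ∈ Finset.range m, (ω.f (c j) (G (s, t (j + 1))) - ω.f (c j) (G (s, t j)))
      = ∑ j ∈ Finset.range m, (V (j + 1) (c j) - V j (c j)) := by
    rw [← Finset.sum_sub_distrib]
    refine Finset.sum_congr rfl fun j _ => ?_
    simp only [hV]
    ring
  linarith [htele, hdiff]

private lemma homotopy_aux {G : ℝ × ℝ → X} (hG : Continuous G) {x₀ y₀ : X}
    (h0 : ∀ s : ℝ, G (s, 0) = x₀) (h1 : ∀ s : ℝ, G (s, 1) = y₀) :
    ω.intOn (fun u => G (0, u)) 0 1 = ω.intOn (fun u => G (1, u)) 0 1 := by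
  have hcover : (Icc (0 : ℝ) 1 ×ˢ Icc (0 : ℝ) 1) ⊆ ⋃ i, G ⁻¹' ω.U i := fun p _ =>
    mem_iUnion.mpr ((ω.covers (G p)).imp fun i hi => hi)
  obtain ⟨δ, hδ, hball⟩ := lebesgue_number_lemma_of_metric
    (isCompact_Icc.prod isCompact_Icc) (fun i => (ω.isOpen i).preimage hG) hcover
  obtain ⟨m, hmgt⟩ := exists_nat_gt (1 / δ)
  have hdpos : 0 < 1 / δ := by positivity
  have hm : 0 < m := by exact_mod_cast hdpos.trans hmgt
  have hm' : (0 : ℝ) < m := by exact_mod_cast hm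
  have hstep : 1 / (m : ℝ) < δ := by
    rw [div_lt_iff₀ hm']
    rw [div_lt_iff₀ hδ] at hmgt
    linarith [mul_comm (m : ℝ) δ]
  have hfrac : ∀ k : ℕ, k ≤ m → (k : ℝ) / m ∈ Icc (0 : ℝ) 1 := by
    intro k hk
    constructor
    · positivity
    · rw [div_le_one hm']
      exact_mod_cast hk
  have hsq : ∀ k j : ℕ, ∃ i : ω.ι, k < m → j < m →
      MapsTo G (Icc ((k : ℝ) / m) (((k + 1 : ℕ) : ℝ) / m) ×ˢ
        Icc ((j : ℝ) / m) (((j + 1 : ℕ) : ℝ) / m)) (ω.U i) := by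
    intro k j
    by_cases hkj : k < m ∧ j < m
    · obtain ⟨i, hi⟩ := hball ((k : ℝ) / m, (j : ℝ) / m)
        (mk_mem_prod (hfrac k hkj.1.le) (hfrac j hkj.2.le))
      refine ⟨i, fun _ _ p hp => hi ?_⟩
      rw [Metric.mem_ball, Prod.dist_eq]
      have e1 : ((k + 1 : ℕ) : ℝ) / m - (k : ℝ) / m = 1 / m := by push_cast; ring
      have e2 : ((j + 1 : ℕ) : ℝ) / m - (j : ℝ) / m = 1 / m := by push_cast; ring
      have d1 : dist p.1 ((k : ℝ) / m) < δ := by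
        rw [Real.dist_eq, abs_of_nonneg (by linarith [hp.1.1])]
        linarith [hp.1.2]
      have d2 : dist p.2 ((j : ℝ) / m) < δ := by
        rw [Real.dist_eq, abs_of_nonneg (by linarith [hp.2.1])]
        linarith [hp.2.2]
      exact max_lt d1 d2
    · exact ⟨(ω.covers (G (0, 0))).choose, fun hk hj => absurd ⟨hk, hj⟩ hkj⟩
  choose c hc using hsq
  have main : ∀ k : ℕ, k ≤ m →
      ω.intOn (fun u => G (0, u)) 0 1 = ω.intOn (fun u => G ((k : ℝ) / m, u)) 0 1 := by
    intro k
    induction k with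
    | zero => intro _; norm_num
    | succ k ih =>
      intro hk
      rw [ih (by omega)]
      refine row_step ω hG h0 h1 ?_ hm (fun j => c k j) (fun j hj => hc k j (by omega) hj)
      exact (div_le_div_iff_of_pos_right hm').mpr (by exact_mod_cast Nat.le_succ k)
  have hfin := main m le_rfl
  rw [hfin]
  simp only [div_self hm'.ne']

private lemma pathIntegral_homotopic {x y : X} {γ₁ γ₂ : Path x y} (h : γ₁.Homotopic γ₂) :
    pathIntegral ω γ₁ = pathIntegral ω γ₂ := by
  obtain ⟨H⟩ := h
  set G : ℝ × ℝ → X :=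
    fun p => H (Set.projIcc 0 1 zero_le_one p.1, Set.projIcc 0 1 zero_le_one p.2) with hGdef
  have hG : Continuous G := H.continuous.comp
    ((continuous_projIcc.comp continuous_fst).prodMk (continuous_projIcc.comp continuous_snd))
  have hp0 : Set.projIcc (0 : ℝ) 1 zero_le_one 0 = 0 := by simp
  have hp1 : Set.projIcc (0 : ℝ) 1 zero_le_one 1 = 1 := by simp
  have h0 : ∀ s : ℝ, G (s, 0) = x := by
    intro s
    simp only [hGdef]
    rw [hp0]
    exact (H.eq_fst _ (Set.mem_insert _ _)).trans γ₁.source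
  have h1' : ∀ s : ℝ, G (s, 1) = y := by
    intro s
    simp only [hGdef]
    rw [hp1]
    exact (H.eq_fst _ (Set.mem_insert_iff.mpr (Or.inr rfl))).trans γ₁.target
  have e0 : (fun u : ℝ => G (0, u)) = fun u => γ₁.extend u := by
    funext u
    simp only [hGdef]
    rw [hp0, ContinuousMap.HomotopyWith.apply_zero]
    rfl
  have e1 : (fun u : ℝ => G (1, u)) = fun u => γ₂.extend u := by
    funext u
    simp only [hGdef]
    rw [hp1, ContinuousMap.HomotopyWith.apply_one]
    rfl
  show ω.intOn (fun u => γ₁.extend u) 0 1 = ω.intOn (fun u => γ₂.extend u) 0 1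
  rw [← e0, ← e1]
  exact homotopy_aux ω hG h0 h1'

private lemma trans_integral {x y z : X} (γ₁ : Path x y) (γ₂ : Path y z) :
    pathIntegral ω (γ₁.trans γ₂) = pathIntegral ω γ₁ + pathIntegral ω γ₂ := by
  have h2 : (0 : ℝ) < 2 := by norm_num
  obtain ⟨r₁, hr₁⟩ := exists_integral ω γ₁.continuous_extend (by norm_num : (0:ℝ) < 1)
  obtain ⟨r₂, hr₂⟩ := exists_integral ω γ₂.continuous_extend (by norm_num : (0:ℝ) < 1)
  have ha₁ : ω.IsIntegralOn (fun s : ℝ => γ₁.extend (2 * s + 0)) 0 (1/2) r₁ := by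
    refine integral_compAffine ω h2 ?_
    norm_num
    exact hr₁
  have ha₂ : ω.IsIntegralOn (fun s : ℝ => γ₂.extend (2 * s + (-1))) (1/2) 1 r₂ := by
    refine integral_compAffine ω h2 ?_
    norm_num
    exact hr₂
  set Γ : ℝ → X := fun s => (γ₁.trans γ₂).extend s with hΓdef
  have heq₁ : ∀ u ∈ Icc (0 : ℝ) (1/2), γ₁.extend (2 * u + 0) = Γ u := by
    intro u hu
    have hu1 : u ∈ Icc (0 : ℝ) 1 := ⟨hu.1, by linarith [hu.2]⟩
    have hmem2 : 2 * u ∈ Icc (0 : ℝ) 1 := ⟨by linarith [hu.1], by linarith [hu.2]⟩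
    simp only [hΓdef]
    rw [show (2:ℝ) * u + 0 = 2 * u by ring, γ₁.extend_apply hmem2,
      (γ₁.trans γ₂).extend_apply hu1, Path.trans_apply]
    rw [dif_pos (show ((⟨u, hu1⟩ : unitInterval) : ℝ) ≤ 1/2 from hu.2)]
  have hb₁ : ω.IsIntegralOn Γ 0 (1/2) r₁ := integral_congr ω ha₁ heq₁
  have heq₂ : ∀ u ∈ Icc (1/2 : ℝ) 1, γ₂.extend (2 * u + (-1)) = Γ u := by
    intro u hu
    have hu1 : u ∈ Icc (0 : ℝ) 1 := ⟨by linarith [hu.1], hu.2⟩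
    simp only [hΓdef]
    rw [(γ₁.trans γ₂).extend_apply hu1, Path.trans_apply]
    rcases lt_or_ge (1/2 : ℝ) u with h' | h'
    · rw [dif_neg (show ¬ ((⟨u, hu1⟩ : unitInterval) : ℝ) ≤ 1/2 from not_le.mpr h')]
      rw [show (2:ℝ) * u + (-1) = 2 * u - 1 by ring]
      exact γ₂.extend_apply ⟨by linarith, by linarith [hu1.2]⟩
    · have huv : u = 1/2 := le_antisymm h' hu.1
      subst huv
      rw [dif_pos (show ((⟨(1:ℝ)/2, hu1⟩ : unitInterval) : ℝ) ≤ 1/2 from le_rfl)]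
      rw [show (2:ℝ) * (1/2) + (-1) = 0 by norm_num, Path.extend_zero]
      symm
      have harg : ∀ v : unitInterval, v = 1 → γ₁ v = y := fun v hv => hv ▸ γ₁.target
      apply harg
      ext
      norm_num
  have hb₂ : ω.IsIntegralOn Γ (1/2) 1 r₂ := integral_congr ω ha₂ heq₂
  have hΓc : Continuous Γ := (γ₁.trans γ₂).continuous_extend
  obtain ⟨R, hR⟩ := exists_integral ω hΓc (by norm_num : (0:ℝ) < 1)
  obtain ⟨R₁, R₂, hRsum, hR₁, hR₂⟩ := integral_split ω (m := 1/2) hR (by norm_num) (by norm_num)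
  have u1 : R₁ = r₁ := integral_unique ω hΓc hR₁ hb₁
  have u2 : R₂ = r₂ := integral_unique ω hΓc hR₂ hb₂
  have p0 : pathIntegral ω (γ₁.trans γ₂) = R := intOn_eq_of ω hΓc hR
  have p1 : pathIntegral ω γ₁ = r₁ := intOn_eq_of ω γ₁.continuous_extend hr₁
  have p2 : pathIntegral ω γ₂ = r₂ := intOn_eq_of ω γ₂.continuous_extend hr₂
  rw [p0, p1, p2, hRsum, u1, u2]

end ClosedOneForm

end PeriodsAux


/-- The line integral descends to a well-defined homomorphism of periods
`π₁(X,x₀) → (ℝ,+)`. -/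
theorem exists_periods_homomorphism
    {X : Type} [TopologicalSpace X] (ω : ClosedOneForm X) (x₀ : X) :
    ∃ φ : FundamentalGroup X x₀ → ℝ,
      (∀ γ : Path x₀ x₀,
        φ (FundamentalGroup.fromPath (X := TopCat.of X) ⟦γ⟧) = pathIntegral ω γ) ∧
      (∀ a b : FundamentalGroup X x₀, φ (a * b) = φ a + φ b) := by
  classical
  have hinv : ∀ γ₁ γ₂ : Path x₀ x₀, Path.Homotopic γ₁ γ₂ →
      pathIntegral ω γ₁ = pathIntegral ω γ₂ := fun γ₁ γ₂ h =>
    ClosedOneForm.pathIntegral_homotopic ω h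
  let L : Path.Homotopic.Quotient x₀ x₀ → ℝ := fun p => Quotient.liftOn p (pathIntegral ω) hinv
  have hLcomp : ∀ p q : Path.Homotopic.Quotient x₀ x₀,
      L (Path.Homotopic.Quotient.trans p q) = L p + L q := by
    intro p q
    refine Quotient.inductionOn₂ p q fun γ₁ γ₂ => ?_
    exact ClosedOneForm.trans_integral ω γ₁ γ₂
  refine ⟨fun a => L (FundamentalGroup.toPath (X := TopCat.of X) a), fun γ => rfl, fun a b => ?_⟩
  have hmul : FundamentalGroup.toPath (X := TopCat.of X) (a * b)
      = Path.Homotopic.Quotient.trans (FundamentalGroup.toPath (X := TopCat.of X) b)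
        (FundamentalGroup.toPath (X := TopCat.of X) a) := rfl
  show L (FundamentalGroup.toPath (X := TopCat.of X) (a * b)) = _
  rw [hmul, hLcomp]
  exact add_comm _ _
end
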